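/- arXiv:2004.13234 — 5 statements merged into one kernel-verified Lean document; each statement's English description precedes it below -/
import Mathlib

section
/- Let a ≥ 2 be an integer and let ε > 0 be real. For every real p, the function x ↦ e^{ipx}·(x − iε)^{−a} is integrable on ℝ, and ∫_ℝ e^{ipx} (x − iε)^{−a} dx = 2π · i^a · p^{a−1} · e^{−εp} / (a−1)! if p > 0, while ∫_ℝ e^{ipx} (x − iε)^{−a} dx = 0 if p ≤ 0. -/
open MeasureTheory Complex

section FTPAux

open Real Set Filter Asymptotics

lemma ftp_real_integrableOn (n : ℕ) {b : ℝ} (hb : 0 < b) :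
    IntegrableOn (fun t : ℝ => t ^ n * Real.exp (-(b * t))) (Set.Ioi 0) := by
  refine integrable_of_isBigO_exp_neg (half_pos hb) ?_ ?_
  · exact ((continuous_pow n).mul (Real.continuous_exp.comp (by continuity))).continuousOn
  · have h := tendsto_rpow_mul_exp_neg_mul_atTop_nhds_zero (n : ℝ) (b / 2) (half_pos hb)
    have h1 : ∀ᶠ t : ℝ in atTop, t ^ (n : ℝ) * Real.exp (-(b / 2) * t) ≤ 1 :=
      h.eventually (eventually_le_nhds one_pos)
    rw [isBigO_iff]
    refine ⟨1, ?_⟩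
    filter_upwards [h1, eventually_ge_atTop (0 : ℝ)] with t ht ht0
    have he : Real.exp (-(b * t)) = Real.exp (-(b / 2) * t) * Real.exp (-(b / 2) * t) := by
      rw [← Real.exp_add]; ring_nf
    have key : t ^ n * Real.exp (-(b * t)) ≤ Real.exp (-(b / 2) * t) := by
      rw [he, ← mul_assoc]
      have hpow : t ^ n * Real.exp (-(b / 2) * t) ≤ 1 := by
        rwa [Real.rpow_natCast] at ht
      calc t ^ n * Real.exp (-(b / 2) * t) * Real.exp (-(b / 2) * t)
          ≤ 1 * Real.exp (-(b / 2) * t) :=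
            mul_le_mul_of_nonneg_right hpow (Real.exp_pos _).le
        _ = Real.exp (-(b / 2) * t) := one_mul _
    have h0 : 0 ≤ t ^ n * Real.exp (-(b * t)) := by positivity
    rw [Real.norm_eq_abs, Real.norm_eq_abs, (_root_.abs_of_nonneg h0),
      _root_.abs_of_nonneg (Real.exp_pos _).le, one_mul]
    exact key

lemma ftp_cplx_integrableOn (n : ℕ) {c : ℂ} (hc : 0 < c.re) :
    IntegrableOn (fun t : ℝ => (t : ℂ) ^ n * Complex.exp (-(c * t))) (Set.Ioi 0) := by
  have hcont : Continuous fun t : ℝ => (t : ℂ) ^ n * Complex.exp (-(c * t)) := by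
    continuity
  refine (ftp_real_integrableOn n hc).mono' hcont.aestronglyMeasurable.restrict ?_
  refine (ae_restrict_iff' measurableSet_Ioi).2 (Filter.Eventually.of_forall fun t ht => ?_)
  have ht0 : (0 : ℝ) < t := ht
  have : ‖(t : ℂ) ^ n * Complex.exp (-(c * t))‖
      = |t| ^ n * Real.exp (-(c.re * t)) := by
    rw [norm_mul, norm_pow, Complex.norm_real, Complex.norm_exp]
    congr 2
    simp
  rw [this, abs_of_pos ht0]

lemma ftp_tendsto (n : ℕ) {c : ℂ} (hc : 0 < c.re) :
    Tendsto (fun x : ℝ => (x : ℂ) ^ n * Complex.exp (-(c * x))) atTop (nhds 0) := by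
  rw [tendsto_zero_iff_norm_tendsto_zero]
  have h := tendsto_rpow_mul_exp_neg_mul_atTop_nhds_zero (n : ℝ) c.re hc
  refine h.congr' ?_
  filter_upwards [eventually_gt_atTop (0 : ℝ)] with x hx
  rw [norm_mul, norm_pow, Complex.norm_real, Complex.norm_exp,
    Real.norm_eq_abs, abs_of_pos hx, Real.rpow_natCast]
  congr 2
  simp

lemma ftp_integral (n : ℕ) {c : ℂ} (hc : 0 < c.re) :
    ∫ t in Set.Ioi (0:ℝ), (t : ℂ) ^ n * Complex.exp (-(c * t))
      = (n.factorial : ℂ) / c ^ (n + 1) := by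
  have hc0 : c ≠ 0 := fun h => by simp [h] at hc
  induction n with
  | zero =>
    have hder : ∀ x ∈ Set.Ici (0:ℝ),
        HasDerivAt (fun t : ℝ => -c⁻¹ * Complex.exp (-(c * t)))
          (Complex.exp (-(c * x))) x := by
      intro x _
      have h1 : HasDerivAt (fun z : ℂ => -c⁻¹ * Complex.exp (-(c * z)))
          (-c⁻¹ * (Complex.exp (-(c * x)) * -c)) (x : ℂ) := by
        have hin : HasDerivAt (fun z : ℂ => -(c * z)) (-c) (x : ℂ) := by
          simpa using ((hasDerivAt_id (x : ℂ)).const_mul (-c))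
        exact hin.cexp.const_mul _
      have := h1.comp_ofReal
      convert this using 1
      field_simp
    have htend : Tendsto (fun x : ℝ => -c⁻¹ * Complex.exp (-(c * x))) atTop (nhds 0) := by
      have := (ftp_tendsto 0 hc).const_mul (-c⁻¹)
      simpa using this
    have hint : IntegrableOn (fun x : ℝ => Complex.exp (-(c * x))) (Set.Ioi 0) := by
      simpa using ftp_cplx_integrableOn 0 hc
    have := integral_Ioi_of_hasDerivAt_of_tendsto' hder hint htend
    simp only [Complex.ofReal_zero, mul_zero, neg_zero, Complex.exp_zero, mul_one, zero_sub,
      neg_neg] at this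
    simpa using this
  | succ n ih =>
    have hder : ∀ x ∈ Set.Ici (0:ℝ),
        HasDerivAt (fun t : ℝ => (t : ℂ) ^ (n + 1) * Complex.exp (-(c * t)))
          ((n + 1 : ℂ) * ((x : ℂ) ^ n * Complex.exp (-(c * x)))
            + (-c) * ((x : ℂ) ^ (n + 1) * Complex.exp (-(c * x)))) x := by
      intro x _
      have h1 : HasDerivAt (fun t : ℝ => (t : ℂ) ^ (n + 1))
          ((n + 1 : ℂ) * (x : ℂ) ^ n) x := by
        have := (hasDerivAt_pow (n + 1) (x : ℂ)).comp_ofReal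
        simpa using this
      have h2 : HasDerivAt (fun t : ℝ => Complex.exp (-(c * t)))
          (Complex.exp (-(c * x)) * -c) x := by
        have hin : HasDerivAt (fun z : ℂ => -(c * z)) (-c) (x : ℂ) := by
          simpa using ((hasDerivAt_id (x : ℂ)).const_mul (-c))
        exact hin.cexp.comp_ofReal
      exact (h1.mul h2).congr_deriv (by ring)
    have htend := ftp_tendsto (n + 1) hc
    have hint : IntegrableOn (fun x : ℝ =>
        (n + 1 : ℂ) * ((x : ℂ) ^ n * Complex.exp (-(c * x)))
          + (-c) * ((x : ℂ) ^ (n + 1) * Complex.exp (-(c * x)))) (Set.Ioi 0) :=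
      ((ftp_cplx_integrableOn n hc).const_mul _).add
        ((ftp_cplx_integrableOn (n + 1) hc).const_mul _)
    have h0 := integral_Ioi_of_hasDerivAt_of_tendsto' hder hint htend
    rw [integral_add ((ftp_cplx_integrableOn n hc).const_mul _)
        ((ftp_cplx_integrableOn (n + 1) hc).const_mul _),
      integral_const_mul, integral_const_mul, ih] at h0
    have h0' : (n + 1 : ℂ) * ((n.factorial : ℂ) / c ^ (n + 1))
        + (-c) * ∫ t in Set.Ioi (0:ℝ), (t : ℂ) ^ (n + 1) * Complex.exp (-(c * t)) = 0 := by
      rw [h0]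
      simp
    have h2 : ((n : ℂ) + 1) * ((n.factorial : ℂ) / c ^ (n + 1))
        = c * ∫ t in Set.Ioi (0:ℝ), (t : ℂ) ^ (n + 1) * Complex.exp (-(c * t)) := by
      linear_combination h0'
    have h3 := (div_eq_iff (pow_ne_zero (n + 1) hc0)).1
      (show ((n : ℂ) + 1) * (n.factorial : ℂ) / c ^ (n + 1)
          = c * ∫ t in Set.Ioi (0:ℝ), (t : ℂ) ^ (n + 1) * Complex.exp (-(c * t)) by
        linear_combination h2)
    rw [eq_div_iff (pow_ne_zero _ hc0)]
    push_cast [Nat.factorial_succ]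
    linear_combination -h3

lemma ftp_fourier (n : ℕ) (hn : 1 ≤ n) {ε : ℝ} (hε : 0 < ε) (ξ : ℝ) :
    FourierTransform.fourier
        (fun t : ℝ => ((max t 0 : ℝ) : ℂ) ^ n * Complex.exp (-((ε : ℂ) * t))) ξ
      = (n.factorial : ℂ) / ((ε : ℂ) + ((2 * π * ξ : ℝ) : ℂ) * Complex.I) ^ (n + 1) := by
  rw [Real.fourier_real_eq_integral_exp_smul]
  have hzero : ∀ v : ℝ, v ∉ Set.Ioi (0:ℝ) →
      Complex.exp (((-2 * π * v * ξ : ℝ) : ℂ) * Complex.I) •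
        (((max v 0 : ℝ) : ℂ) ^ n * Complex.exp (-((ε : ℂ) * v))) = 0 := by
    intro v hv
    rw [Set.mem_Ioi, not_lt] at hv
    rw [max_eq_right hv]
    simp [zero_pow (Nat.one_le_iff_ne_zero.1 hn)]
  rw [← setIntegral_eq_integral_of_forall_compl_eq_zero hzero]
  have hc : (0:ℝ) < ((ε : ℂ) + ((2 * π * ξ : ℝ) : ℂ) * Complex.I).re := by simpa using hε
  rw [show ∫ v in Set.Ioi (0:ℝ),
        Complex.exp (((-2 * π * v * ξ : ℝ) : ℂ) * Complex.I) •
          (((max v 0 : ℝ) : ℂ) ^ n * Complex.exp (-((ε : ℂ) * v)))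
      = ∫ v in Set.Ioi (0:ℝ), (v : ℂ) ^ n *
          Complex.exp (-(((ε : ℂ) + ((2 * π * ξ : ℝ) : ℂ) * Complex.I) * v)) from
    setIntegral_congr_fun measurableSet_Ioi fun v hv => ?_, ftp_integral n hc]
  have hv' : (0:ℝ) < v := hv
  rw [smul_eq_mul, max_eq_left hv'.le, mul_comm, mul_assoc, ← Complex.exp_add]
  congr 2
  push_cast
  ring

lemma ftp_integrable_base {ε : ℝ} (hε : 0 < ε) :
    Integrable (fun x : ℝ => (x ^ 2 + ε ^ 2)⁻¹) := by
  have h1 := (integrable_inv_one_add_sq.comp_div hε.ne').const_mul (ε ^ 2)⁻¹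
  refine h1.congr (Filter.Eventually.of_forall fun x => ?_)
  field_simp
  ring

lemma ftp_integrable_pole (a : ℕ) (ha : 2 ≤ a) {ε : ℝ} (hε : 0 < ε) {z : ℝ → ℂ}
    (hz : Continuous z) (hznorm : ∀ x : ℝ, x ^ 2 + ε ^ 2 ≤ ‖z x‖ ^ 2) :
    Integrable (fun x : ℝ => z x ^ (-(a : ℤ))) := by
  have hεz : ∀ x, ε ≤ ‖z x‖ := by
    intro x
    nlinarith [hznorm x, norm_nonneg (z x), sq_nonneg x, hε]
  have hz0 : ∀ x, z x ≠ 0 := by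
    intro x h
    have := hεz x
    rw [h, norm_zero] at this
    linarith
  have hcont : Continuous fun x : ℝ => z x ^ (-(a : ℤ)) :=
    hz.zpow₀ _ fun x => Or.inl (hz0 x)
  refine (((ftp_integrable_base hε).const_mul (ε ^ (a - 2))⁻¹)).mono'
    hcont.aestronglyMeasurable (Filter.Eventually.of_forall fun x => ?_)
  have hpos : (0:ℝ) < ‖z x‖ := lt_of_lt_of_le hε (hεz x)
  rw [norm_zpow, zpow_neg, zpow_natCast, ← mul_inv]
  refine inv_anti₀ (by positivity) ?_
  have e : ‖z x‖ ^ a = ‖z x‖ ^ 2 * ‖z x‖ ^ (a - 2) := by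
    rw [← pow_add]; congr 1; omega
  rw [e, mul_comm (ε ^ (a - 2))]
  exact mul_le_mul (hznorm x) (pow_le_pow_left₀ hε.le (hεz x) _)
    (by positivity) (by positivity)

end FTPAux

open FourierTransform Real

set_option maxHeartbeats 1000000

/-- The Fourier transform building block of lightcone conformal truncation:
for an integer `a ≥ 2` and `ε > 0`, the function `x ↦ e^{ipx}(x − iε)^{−a}` is
integrable on `ℝ`, and its integral equals `2π i^a p^{a−1} e^{−εp}/(a−1)!` for
`p > 0` and `0` for `p ≤ 0`. -/
theorem fourier_transform_pole (a : ℕ) (ha : 2 ≤ a) (ε : ℝ) (hε : 0 < ε) (p : ℝ) :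
    Integrable (fun x : ℝ =>
      Complex.exp (Complex.I * p * x) * ((x : ℂ) - Complex.I * ε) ^ (-(a : ℤ))) ∧
    (0 < p →
      ∫ x : ℝ, Complex.exp (Complex.I * p * x) * ((x : ℂ) - Complex.I * ε) ^ (-(a : ℤ))
        = 2 * Real.pi * Complex.I ^ a * (p : ℂ) ^ (a - 1) * Complex.exp (-(ε * p))
            / (Nat.factorial (a - 1) : ℂ)) ∧
    (p ≤ 0 →
      ∫ x : ℝ, Complex.exp (Complex.I * p * x) * ((x : ℂ) - Complex.I * ε) ^ (-(a : ℤ))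
        = 0) := by
  obtain ⟨n, rfl⟩ : ∃ n, a = n + 1 := ⟨a - 1, by omega⟩
  have hn : 1 ≤ n := by omega
  -- the pole function x ↦ (x - iε)^{-a} is integrable
  have hz1cont : Continuous fun x : ℝ => (x : ℂ) - Complex.I * ε := by continuity
  have hz1norm : ∀ x : ℝ, x ^ 2 + ε ^ 2 ≤ ‖(x : ℂ) - Complex.I * ε‖ ^ 2 := by
    intro x
    have : ‖(x : ℂ) - Complex.I * ε‖ ^ 2 = x ^ 2 + ε ^ 2 := by
      rw [Complex.sq_norm, Complex.normSq_apply]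
      simp
      ring
    rw [this]
  have hIntPole := ftp_integrable_pole (n + 1) (by omega) hε hz1cont hz1norm
  have hInt : Integrable (fun x : ℝ =>
      Complex.exp (Complex.I * p * x) * ((x : ℂ) - Complex.I * ε) ^ (-((n + 1 : ℕ) : ℤ))) := by
    refine hIntPole.bdd_mul (c := 1)
      (Complex.continuous_exp.comp (by continuity)).aestronglyMeasurable (Filter.Eventually.of_forall fun x => ?_)
    rw [Complex.norm_exp]
    simp
  refine ⟨hInt, ?_⟩
  -- the one-sided exponential
  set f : ℝ → ℂ := fun t => ((max t 0 : ℝ) : ℂ) ^ n * Complex.exp (-((ε : ℂ) * t)) with hfdef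
  have hfcont : Continuous f := by
    apply Continuous.mul
    · exact (Complex.continuous_ofReal.comp (continuous_id.max continuous_const)).pow n
    · exact Complex.continuous_exp.comp (by continuity)
  have hfint : Integrable f := by
    rw [← integrableOn_univ, ← Set.Iic_union_Ioi (a := (0:ℝ))]
    apply MeasureTheory.IntegrableOn.union
    · refine (integrableOn_zero).congr_fun (fun t ht => ?_) measurableSet_Iic
      rw [hfdef]
      simp only
      rw [max_eq_right ht]
      simp [zero_pow (Nat.one_le_iff_ne_zero.1 hn)]
    · refine (ftp_cplx_integrableOn n (c := (ε : ℂ)) (by simpa using hε)).congr_fun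
        (fun t ht => ?_) measurableSet_Ioi
      rw [hfdef]
      simp only
      rw [max_eq_left (le_of_lt ht)]
  have hFf : 𝓕 f = fun ξ : ℝ => (n.factorial : ℂ) *
      ((ε : ℂ) + ((2 * π * ξ : ℝ) : ℂ) * Complex.I) ^ (-((n + 1 : ℕ) : ℤ)) := by
    funext ξ
    rw [show 𝓕 f ξ = FourierTransform.fourier f ξ from rfl, hfdef, ftp_fourier n hn hε ξ,
      zpow_neg, zpow_natCast, div_eq_mul_inv]
  have hccont : Continuous fun ξ : ℝ => (ε : ℂ) + ((2 * π * ξ : ℝ) : ℂ) * Complex.I := by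
    continuity
  have hcnorm : ∀ ξ : ℝ, ξ ^ 2 + ε ^ 2 ≤
      ‖(ε : ℂ) + ((2 * π * ξ : ℝ) : ℂ) * Complex.I‖ ^ 2 := by
    intro ξ
    have : ‖(ε : ℂ) + ((2 * π * ξ : ℝ) : ℂ) * Complex.I‖ ^ 2 = ε ^ 2 + (2 * π * ξ) ^ 2 := by
      rw [Complex.sq_norm, Complex.normSq_apply]
      simp
      ring
    rw [this]
    have h9 : (3:ℝ) ^ 2 ≤ π ^ 2 := pow_le_pow_left₀ (by norm_num) Real.pi_gt_three.le 2
    nlinarith [h9, sq_nonneg ξ]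
  have hFfint : Integrable (𝓕 f) := by
    rw [hFf]
    exact (ftp_integrable_pole (n + 1) (by omega) hε hccont hcnorm).const_mul _
  have hinv : 𝓕⁻ (𝓕 f) p = f p := hfint.fourierInv_fourier_eq hFfint hfcont.continuousAt
  rw [Real.fourierInv_eq', hFf] at hinv
  simp only [RCLike.inner_apply, conj_trivial, smul_eq_mul] at hinv
  simp only [mul_comm p] at hinv
  -- change of variables
  set g : ℝ → ℂ := fun x => Complex.exp (Complex.I * p * x) *
      ((n.factorial : ℂ) * ((ε : ℂ) + (x : ℂ) * Complex.I) ^ (-((n + 1 : ℕ) : ℤ))) with hgdef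
  have hcomp : ∀ ξ : ℝ, Complex.exp (((2 * π * (ξ * p) : ℝ) : ℂ) * Complex.I) *
      ((n.factorial : ℂ) * ((ε : ℂ) + ((2 * π * ξ : ℝ) : ℂ) * Complex.I) ^ (-((n + 1 : ℕ) : ℤ)))
      = g (2 * π * ξ) := by
    intro ξ
    rw [hgdef]
    simp only
    rw [show (((2 * π * (ξ * p) : ℝ)) : ℂ) * Complex.I
        = Complex.I * p * ((2 * π * ξ : ℝ) : ℂ) by push_cast; ring]
  have hgH : ∀ x : ℝ, g x = ((n.factorial : ℂ) * Complex.I ^ (-((n + 1 : ℕ) : ℤ))) *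
      (Complex.exp (Complex.I * p * x) * ((x : ℂ) - Complex.I * ε) ^ (-((n + 1 : ℕ) : ℤ))) := by
    intro x
    rw [hgdef]
    simp only
    rw [show ((ε : ℂ) + (x : ℂ) * Complex.I) ^ (-((n + 1 : ℕ) : ℤ))
        = Complex.I ^ (-((n + 1 : ℕ) : ℤ)) * ((x : ℂ) - Complex.I * ε) ^ (-((n + 1 : ℕ) : ℤ)) by
      rw [← mul_zpow]
      congr 1
      rw [mul_sub, ← mul_assoc, Complex.I_mul_I]
      ring]
    ring
  have hstep : f p = ((2 * π : ℝ) : ℂ)⁻¹ * (((n.factorial : ℂ) * Complex.I ^ (-((n + 1 : ℕ) : ℤ))) *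
      ∫ x : ℝ, Complex.exp (Complex.I * p * x) * ((x : ℂ) - Complex.I * ε) ^ (-((n + 1 : ℕ) : ℤ))) := by
    rw [← hinv]
    calc ∫ ξ : ℝ, Complex.exp (((2 * π * (ξ * p) : ℝ) : ℂ) * Complex.I) *
          ((n.factorial : ℂ) * ((ε : ℂ) + ((2 * π * ξ : ℝ) : ℂ) * Complex.I) ^ (-((n + 1 : ℕ) : ℤ)))
        = ∫ ξ : ℝ, g (2 * π * ξ) := by
          exact integral_congr_ae (Filter.Eventually.of_forall hcomp)
      _ = |(2 * π : ℝ)⁻¹| • ∫ x : ℝ, g x := Measure.integral_comp_mul_left g (2 * π)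
      _ = ((2 * π : ℝ) : ℂ)⁻¹ * (((n.factorial : ℂ) * Complex.I ^ (-((n + 1 : ℕ) : ℤ))) *
          ∫ x : ℝ, Complex.exp (Complex.I * p * x) * ((x : ℂ) - Complex.I * ε) ^ (-((n + 1 : ℕ) : ℤ))) := by
          rw [show (fun x : ℝ => g x) = fun x : ℝ =>
              ((n.factorial : ℂ) * Complex.I ^ (-((n + 1 : ℕ) : ℤ))) *
              (Complex.exp (Complex.I * p * x) * ((x : ℂ) - Complex.I * ε) ^ (-((n + 1 : ℕ) : ℤ)))
            from funext hgH, MeasureTheory.integral_const_mul]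
          rw [abs_of_pos (by positivity : (0:ℝ) < (2 * π)⁻¹), real_smul]
          push_cast
          ring
  have hIne : Complex.I ^ (n + 1) ≠ 0 := pow_ne_zero _ Complex.I_ne_zero
  have hfacne : ((n.factorial : ℕ) : ℂ) ≠ 0 := Nat.cast_ne_zero.2 n.factorial_ne_zero
  have hπne : ((2 * π : ℝ) : ℂ) ≠ 0 := by
    simp [Real.pi_ne_zero]
  have hmain : (∫ x : ℝ, Complex.exp (Complex.I * p * x) *
      ((x : ℂ) - Complex.I * ε) ^ (-((n + 1 : ℕ) : ℤ)))
      = 2 * (π : ℂ) * Complex.I ^ (n + 1) * f p / (n.factorial : ℂ) := by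
    have hπC : (π : ℂ) ≠ 0 := by exact_mod_cast Real.pi_ne_zero
    set J := ∫ x : ℝ, Complex.exp (Complex.I * p * x) *
        ((x : ℂ) - Complex.I * ε) ^ (-((n + 1 : ℕ) : ℤ)) with hJ
    rw [hstep, zpow_neg, zpow_natCast]
    push_cast
    field_simp
  refine ⟨fun hp => ?_, fun hp => ?_⟩
  · rw [hmain, hfdef]
    simp only [Nat.add_sub_cancel]
    rw [max_eq_left hp.le]
    push_cast
    ring
  · rw [hmain, hfdef]
    simp only
    rw [max_eq_right hp]
    simp [zero_pow (Nat.one_le_iff_ne_zero.1 hn)]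
end

section
/- For all nonnegative integers ℓ and ℓ', and for every x₁ ∈ (0,1), the principal-value limit lim_{δ→0⁺} ∫_{[0,1]∖(x₁−δ, x₁+δ)} P_ℓ(1−2x₁)·(P_{ℓ'}(1−2x₁) − P_{ℓ'}(1−2x₂))/(x₁−x₂)² dx₂ exists, and the resulting function of x₁ is integrable on (0,1); hence the quantity J(ℓ,ℓ') is well defined. -/
open MeasureTheory Filter Set

/-- The Legendre polynomial `P_ℓ`, via the Rodrigues formula
`P_ℓ(w) = (1/(2^ℓ ℓ!)) (d/dw)^ℓ (w²−1)^ℓ`. -/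
noncomputable def legendreP (ℓ : ℕ) (w : ℝ) : ℝ :=
  ((2 : ℝ) ^ ℓ * Nat.factorial ℓ)⁻¹ * iteratedDeriv ℓ (fun t : ℝ => (t ^ 2 - 1) ^ ℓ) w

/-- `IsJ ℓ ℓ' v` asserts that the quantity
`J(ℓ,ℓ') = ∫₀¹ (PV ∫₀¹ P_ℓ(1−2x₁)(P_{ℓ'}(1−2x₁) − P_{ℓ'}(1−2x₂))/(x₁−x₂)² dx₂) dx₁`
is well defined and equals `v`: there is a function `g` such that for every
`x₁ ∈ (0,1)` the inner principal value (around `x₂ = x₁`) exists and equals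
`g x₁`, `g` is integrable on `(0,1)`, and `∫₀¹ g = v`. -/
def IsJ (ℓ ℓ' : ℕ) (v : ℝ) : Prop :=
  ∃ g : ℝ → ℝ,
    (∀ x₁ ∈ Ioo (0 : ℝ) 1,
      Tendsto (fun δ : ℝ =>
          ∫ x₂ in Ioo (0 : ℝ) 1 \ Ioo (x₁ - δ) (x₁ + δ),
            legendreP ℓ (1 - 2 * x₁) * (legendreP ℓ' (1 - 2 * x₁) - legendreP ℓ' (1 - 2 * x₂))
              / (x₁ - x₂) ^ 2)
        (nhdsWithin 0 (Ioi 0)) (nhds (g x₁))) ∧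
    IntegrableOn g (Ioo (0 : ℝ) 1) ∧
    ∫ x₁ in Ioo (0 : ℝ) 1, g x₁ = v

section Aux
open Polynomial

lemma iteratedDeriv_polyEval (p : Polynomial ℝ) (n : ℕ) :
    iteratedDeriv n (fun t : ℝ => p.eval t) = fun t => (derivative^[n] p).eval t := by
  induction n with
  | zero => simp
  | succ n ih =>
    rw [iteratedDeriv_succ, ih, Function.iterate_succ_apply']
    funext t
    exact Polynomial.deriv (p := derivative^[n] p)


noncomputable def legPoly (ℓ : ℕ) : Polynomial ℝ :=
  Polynomial.C (((2:ℝ)^ℓ * Nat.factorial ℓ)⁻¹) * derivative^[ℓ] ((X^2 - 1)^ℓ)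

lemma legendreP_eq (ℓ : ℕ) (w : ℝ) : legendreP ℓ w = (legPoly ℓ).eval w := by
  unfold legendreP legPoly
  rw [show (fun t : ℝ => (t^2 - 1)^ℓ) = fun t => ((X^2 - 1 : Polynomial ℝ)^ℓ).eval t by
      funext t; simp, iteratedDeriv_polyEval]
  simp

noncomputable def polyR (p : Polynomial ℝ) (a y : ℝ) : ℝ :=
  ∑ k ∈ Finset.range (p.natDegree + 1), ((Polynomial.hasseDeriv (k+2) p).eval a) * (y - a)^k

lemma taylor2 (p : Polynomial ℝ) (a y : ℝ) :
    p.eval y = p.eval a + (y - a) * p.derivative.eval a + (y - a)^2 * polyR p a y := by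
  have h1 : p.eval y = (taylor a p).eval (y - a) := (taylor_eval_sub a p y).symm
  rw [h1, eval_eq_sum_range' (n := p.natDegree + 3)
      (by rw [natDegree_taylor]; omega)]
  rw [Finset.sum_range_succ', Finset.sum_range_succ']
  simp only [taylor_coeff, pow_zero, mul_one, pow_one]
  rw [hasseDeriv_zero', hasseDeriv_one']
  unfold polyR
  rw [Finset.mul_sum]
  rw [Finset.sum_congr rfl (fun k _ => by ring : ∀ k ∈ Finset.range (p.natDegree + 1),
      (hasseDeriv (k + 1 + 1) p).eval a * (y-a) ^ (k + 1 + 1) = (y - a)^2 * ((hasseDeriv (k+2) p).eval a * (y - a)^k))]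
  ring

noncomputable def intR (p : Polynomial ℝ) (a : ℝ) : ℝ :=
  ∑ k ∈ Finset.range (p.natDegree + 1),
    ((Polynomial.hasseDeriv (k+2) p).eval a) * (((1-a)^(k+1) - (0-a)^(k+1)) / (k+1))

lemma continuous_polyR (p : Polynomial ℝ) (a : ℝ) : Continuous (polyR p a) := by
  unfold polyR; fun_prop

lemma continuous_intR (p : Polynomial ℝ) : Continuous (intR p) := by
  unfold intR
  refine continuous_finset_sum _ fun k _ => ?_
  exact ((hasseDeriv (k+2) p).continuous_aeval).mul (by fun_prop)

lemma integ_pow_Ioo (a : ℝ) (k : ℕ) :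
    ∫ y in Ioo (0:ℝ) 1, (y - a)^k = ((1-a)^(k+1) - (0-a)^(k+1)) / (k+1) := by
  rw [← MeasureTheory.integral_Ioc_eq_integral_Ioo,
    ← intervalIntegral.integral_of_le (by norm_num : (0:ℝ) ≤ 1),
    intervalIntegral.integral_comp_sub_right (fun x => x ^ k) a, integral_pow]

lemma intR_eq (p : Polynomial ℝ) (a : ℝ) :
    ∫ y in Ioo (0:ℝ) 1, polyR p a y = intR p a := by
  unfold polyR intR
  rw [MeasureTheory.integral_finset_sum]
  · refine Finset.sum_congr rfl fun k _ => ?_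
    rw [MeasureTheory.integral_const_mul, integ_pow_Ioo]
  · intro k _
    exact (Continuous.integrableOn_Ioc (by fun_prop)).mono_set Ioo_subset_Ioc_self

lemma integrableOn_log_Ioo : IntegrableOn Real.log (Ioo (0:ℝ) 1) := by
  have h1 : IntegrableOn (fun x : ℝ => 2 * x ^ (-(1:ℝ)/2)) (Ioo (0:ℝ) 1) := by
    have h := (intervalIntegral.intervalIntegrable_rpow' (a := (0:ℝ)) (b := 1)
      (r := -(1:ℝ)/2) (by norm_num)).const_mul (2:ℝ)
    rwa [intervalIntegrable_iff_integrableOn_Ioo_of_le (by norm_num)] at h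
  refine h1.integrable.mono Real.measurable_log.aestronglyMeasurable ?_
  rw [ae_restrict_iff' measurableSet_Ioo]
  refine ae_of_all _ fun x hx => ?_
  have hx0 : 0 < x := hx.1
  have hrp : (0:ℝ) < x ^ (-(1:ℝ)/2) := Real.rpow_pos_of_pos hx0 _
  have hlog := Real.add_one_le_exp (Real.log (x ^ (-(1:ℝ)/2)))
  have h2 : Real.log (x ^ (-(1:ℝ)/2)) ≤ x ^ (-(1:ℝ)/2) - 1 :=
    by linarith [Real.log_le_sub_one_of_pos hrp]
  rw [Real.log_rpow hx0] at h2
  have hneg : Real.log x ≤ 0 := Real.log_nonpos hx0.le hx.2.le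
  rw [Real.norm_eq_abs, Real.norm_eq_abs, abs_of_nonpos hneg,
    abs_of_nonneg (by positivity : (0:ℝ) ≤ 2 * x ^ (-(1:ℝ)/2))]
  linarith

lemma integrableOn_log_one_sub : IntegrableOn (fun x => Real.log (1 - x)) (Ioo (0:ℝ) 1) := by
  have h : IntervalIntegrable Real.log volume 0 1 := by
    rw [intervalIntegrable_iff_integrableOn_Ioo_of_le (by norm_num)]
    exact integrableOn_log_Ioo
  have h2 := (h.comp_sub_left 1).symm
  simp only [sub_zero, sub_self] at h2
  rw [intervalIntegrable_iff_integrableOn_Ioo_of_le (by norm_num)] at h2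
  exact h2

lemma S_eq {a δ : ℝ} (hδ : 0 < δ) (h1 : δ < a) (h2 : δ < 1 - a) :
    Ioo (0:ℝ) 1 \ Ioo (a - δ) (a + δ) = Ioc 0 (a - δ) ∪ Ico (a + δ) 1 := by
  ext y
  simp only [mem_diff, mem_Ioo, mem_union, mem_Ioc, mem_Ico, not_and, not_lt]
  constructor
  · rintro ⟨⟨h0, hy1⟩, h⟩
    by_cases hc : a - δ < y
    · exact Or.inr ⟨h hc, hy1⟩
    · exact Or.inl ⟨h0, le_of_not_gt hc⟩
  · rintro (⟨h0, hy⟩ | ⟨hy, hy1⟩)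
    · exact ⟨⟨h0, by linarith⟩, fun h => by linarith⟩
    · exact ⟨⟨by linarith, hy1⟩, fun h => by linarith⟩

lemma integrableOn_inv_left {a δ : ℝ} (hδ : 0 < δ) (h1 : δ < a) :
    IntegrableOn (fun y => (a - y)⁻¹) (Ioc 0 (a - δ)) := by
  refine (ContinuousOn.integrableOn_Icc ?_).mono_set Ioc_subset_Icc_self
  refine ContinuousOn.inv₀ (by fun_prop) fun y hy => ?_
  simp only [mem_Icc] at hy
  exact ne_of_gt (by linarith [hy.2])

lemma integrableOn_inv_right {a δ : ℝ} (hδ : 0 < δ) (h2 : δ < 1 - a) :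
    IntegrableOn (fun y => (a - y)⁻¹) (Ico (a + δ) 1) := by
  refine (ContinuousOn.integrableOn_Icc ?_).mono_set Ico_subset_Icc_self
  refine ContinuousOn.inv₀ (by fun_prop) fun y hy => ?_
  simp only [mem_Icc] at hy
  exact ne_of_lt (by linarith [hy.1])

lemma integ_inv_S {a δ : ℝ} (ha : 0 < a) (ha1 : a < 1) (hδ : 0 < δ) (h1 : δ < a)
    (h2 : δ < 1 - a) :
    ∫ y in Ioo (0:ℝ) 1 \ Ioo (a - δ) (a + δ), (a - y)⁻¹
      = Real.log a - Real.log (1 - a) := by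
  have hdisj : Disjoint (Ioc (0:ℝ) (a - δ)) (Ico (a + δ) 1) := by
    rw [Set.disjoint_left]
    intro y hy hy2
    simp only [mem_Ioc, mem_Ico] at hy hy2
    linarith [hy.2, hy2.1]
  rw [S_eq hδ h1 h2,
    setIntegral_union hdisj measurableSet_Ico (integrableOn_inv_left hδ h1)
      (integrableOn_inv_right hδ h2)]
  have e1 : ∫ y in Ioc (0:ℝ) (a - δ), (a - y)⁻¹ = Real.log a - Real.log δ := by
    rw [← intervalIntegral.integral_of_le (by linarith),
      intervalIntegral.integral_comp_sub_left (fun u => u⁻¹) a]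
    rw [show a - (a - δ) = δ by ring, show a - 0 = a by ring]
    rw [integral_inv (by
      intro hmem
      rw [Set.mem_uIcc] at hmem
      rcases hmem with ⟨h', _⟩ | ⟨h', _⟩ <;> linarith)]
    rw [Real.log_div (by linarith) (by linarith)]
  have e2 : ∫ y in Ico (a + δ) 1, (a - y)⁻¹ = Real.log δ - Real.log (1 - a) := by
    rw [MeasureTheory.integral_Ico_eq_integral_Ioo, ← MeasureTheory.integral_Ioc_eq_integral_Ioo,
      ← intervalIntegral.integral_of_le (by linarith),
      intervalIntegral.integral_comp_sub_left (fun u => u⁻¹) a]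
    rw [show a - (a + δ) = -δ by ring]
    rw [integral_inv (by
      intro hmem
      rw [Set.mem_uIcc] at hmem
      rcases hmem with ⟨h', h''⟩ | ⟨h', h''⟩ <;> linarith)]
    rw [show (-δ) / (a - 1) = δ / (1 - a) by
      rw [div_eq_div_iff (by linarith) (by linarith)]; ring]
    rw [Real.log_div (by linarith) (by linarith)]
  rw [e1, e2]; ring

end Aux

open Polynomial in
/-- For all nonnegative integers `ℓ, ℓ'`, the matrix element `J(ℓ,ℓ')` of 2D
large-`N_c` QCD in lightcone conformal truncation is well defined: the inner
principal value exists for each `x₁ ∈ (0,1)` and is integrable on `(0,1)`. -/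
theorem J_well_defined (ℓ ℓ' : ℕ) : ∃ v : ℝ, IsJ ℓ ℓ' v := by
  classical
  set A : Polynomial ℝ := (legPoly ℓ).comp (Polynomial.C 1 - Polynomial.C 2 * Polynomial.X)
    with hAdef
  set B : Polynomial ℝ := (legPoly ℓ').comp (Polynomial.C 1 - Polynomial.C 2 * Polynomial.X)
    with hBdef
  have hA : ∀ x : ℝ, legendreP ℓ (1 - 2 * x) = A.eval x := fun x => by
    rw [legendreP_eq, hAdef, Polynomial.eval_comp]; norm_num
  have hB : ∀ x : ℝ, legendreP ℓ' (1 - 2 * x) = B.eval x := fun x => by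
    rw [legendreP_eq, hBdef, Polynomial.eval_comp]; norm_num
  set g : ℝ → ℝ := fun a =>
    A.eval a * B.derivative.eval a * (Real.log a - Real.log (1 - a)) - A.eval a * intR B a
    with hgdef
  refine ⟨∫ a in Ioo (0:ℝ) 1, g a, g, ?_, ?_, rfl⟩
  · -- the principal value exists
    rintro a ⟨ha0, ha1⟩
    obtain ⟨M, hM⟩ := (isCompact_Icc (a := (0:ℝ)) (b := 1)).exists_bound_of_continuousOn
        (continuous_polyR B a).continuousOn
    have hM0 : 0 ≤ M := le_trans (norm_nonneg _) (hM 0 (by norm_num))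
    have hRInt : IntegrableOn (polyR B a) (Ioo (0:ℝ) 1) :=
      ((continuous_polyR B a).integrableOn_Icc).mono_set Ioo_subset_Icc_self
    have hεpos : 0 < min a (1 - a) := lt_min ha0 (by linarith)
    have key : ∀ δ ∈ Ioo (0:ℝ) (min a (1-a)),
        ‖(∫ x₂ in Ioo (0:ℝ) 1 \ Ioo (a - δ) (a + δ),
            legendreP ℓ (1 - 2 * a) * (legendreP ℓ' (1 - 2 * a) - legendreP ℓ' (1 - 2 * x₂))
              / (a - x₂) ^ 2) - g a‖ ≤ |A.eval a| * (M * (2 * δ)) := by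
      rintro δ ⟨hδ0, hδlt⟩
      have h1 : δ < a := lt_of_lt_of_le hδlt (min_le_left _ _)
      have h2 : δ < 1 - a := lt_of_lt_of_le hδlt (min_le_right _ _)
      have hSmeas : MeasurableSet (Ioo (0:ℝ) 1 \ Ioo (a - δ) (a + δ)) :=
        measurableSet_Ioo.diff measurableSet_Ioo
      have hptwise : EqOn
          (fun x₂ => legendreP ℓ (1 - 2 * a) *
            (legendreP ℓ' (1 - 2 * a) - legendreP ℓ' (1 - 2 * x₂)) / (a - x₂) ^ 2)
          (fun y => A.eval a * B.derivative.eval a * (a - y)⁻¹ - A.eval a * polyR B a y)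
          (Ioo (0:ℝ) 1 \ Ioo (a - δ) (a + δ)) := by
        intro y hy
        have hya : a - y ≠ 0 := by
          rcases hy with ⟨_, hy2⟩
          simp only [mem_Ioo, not_and, not_lt] at hy2
          rcases lt_or_ge (a - δ) y with h | h
          · have := hy2 h
            intro hh; linarith
          · intro hh; linarith
        simp only
        rw [hA, hB, hB, taylor2 B a y]
        field_simp
        ring
      rw [setIntegral_congr_fun hSmeas hptwise]
      have hIinv : IntegrableOn (fun y => (a - y)⁻¹)
          (Ioo (0:ℝ) 1 \ Ioo (a - δ) (a + δ)) := by
        rw [S_eq hδ0 h1 h2]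
        exact (integrableOn_inv_left hδ0 h1).union (integrableOn_inv_right hδ0 h2)
      have hIR : IntegrableOn (polyR B a) (Ioo (0:ℝ) 1 \ Ioo (a - δ) (a + δ)) :=
        hRInt.mono_set diff_subset
      rw [MeasureTheory.integral_sub (hIinv.const_mul _) (hIR.const_mul _),
        MeasureTheory.integral_const_mul, MeasureTheory.integral_const_mul,
        integ_inv_S ha0 ha1 hδ0 h1 h2]
      have hsplit : ∫ y in Ioo (0:ℝ) 1 \ Ioo (a - δ) (a + δ), polyR B a y
          = intR B a - ∫ y in Ioo (0:ℝ) 1 ∩ Ioo (a - δ) (a + δ), polyR B a y := by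
        rw [← Set.diff_self_inter, MeasureTheory.integral_diff
          (measurableSet_Ioo.inter measurableSet_Ioo) hRInt inter_subset_left, intR_eq]
      rw [hsplit, hgdef]
      have hrw : A.eval a * B.derivative.eval a * (Real.log a - Real.log (1 - a)) -
            A.eval a * (intR B a - ∫ y in Ioo (0:ℝ) 1 ∩ Ioo (a - δ) (a + δ), polyR B a y) -
            (A.eval a * B.derivative.eval a * (Real.log a - Real.log (1 - a)) -
              A.eval a * intR B a)
          = A.eval a * ∫ y in Ioo (0:ℝ) 1 ∩ Ioo (a - δ) (a + δ), polyR B a y := by ring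
      rw [hrw]
      have hTbound : ‖∫ y in Ioo (0:ℝ) 1 ∩ Ioo (a - δ) (a + δ), polyR B a y‖
          ≤ M * (volume (Ioo (0:ℝ) 1 ∩ Ioo (a - δ) (a + δ))).toReal := by
        refine norm_setIntegral_le_of_norm_le_const ?_ ?_
        · exact lt_of_le_of_lt (measure_mono inter_subset_left)
            (by rw [Real.volume_Ioo]; exact ENNReal.ofReal_lt_top)
        · intro x hx
          exact hM x (Ioo_subset_Icc_self hx.1)
      have hTvol : (volume (Ioo (0:ℝ) 1 ∩ Ioo (a - δ) (a + δ))).toReal ≤ 2 * δ := by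
        have hle : volume (Ioo (0:ℝ) 1 ∩ Ioo (a - δ) (a + δ))
            ≤ ENNReal.ofReal (2 * δ) := by
          refine le_trans (measure_mono inter_subset_right) ?_
          rw [Real.volume_Ioo]
          exact ENNReal.ofReal_le_ofReal (by ring_nf; linarith)
        calc (volume (Ioo (0:ℝ) 1 ∩ Ioo (a - δ) (a + δ))).toReal
            ≤ (ENNReal.ofReal (2 * δ)).toReal :=
              ENNReal.toReal_mono ENNReal.ofReal_ne_top hle
          _ = 2 * δ := ENNReal.toReal_ofReal (by linarith)
      rw [norm_mul]
      refine mul_le_mul_of_nonneg_left ?_ (abs_nonneg _)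
      exact le_trans hTbound (mul_le_mul_of_nonneg_left hTvol hM0)
    have hb : Tendsto (fun δ : ℝ => |A.eval a| * (M * (2 * δ)))
        (nhdsWithin 0 (Ioi 0)) (nhds 0) := by
      have hc : Continuous fun δ : ℝ => |A.eval a| * (M * (2 * δ)) := by fun_prop
      have h := (hc.tendsto 0).mono_left (nhdsWithin_le_nhds (s := Ioi (0:ℝ)))
      simpa using h
    have hev : ∀ᶠ δ in nhdsWithin (0:ℝ) (Ioi 0),
        ‖(∫ x₂ in Ioo (0:ℝ) 1 \ Ioo (a - δ) (a + δ),
            legendreP ℓ (1 - 2 * a) * (legendreP ℓ' (1 - 2 * a) - legendreP ℓ' (1 - 2 * x₂))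
              / (a - x₂) ^ 2) - g a‖ ≤ |A.eval a| * (M * (2 * δ)) := by
      filter_upwards [Ioo_mem_nhdsGT_of_mem (left_mem_Ico.2 hεpos)] with δ hδ
      exact key δ hδ
    have htz := squeeze_zero_norm' hev hb
    have hfin := htz.add (tendsto_const_nhds (x := g a)
      (f := nhdsWithin (0:ℝ) (Ioi 0)))
    simpa using hfin
  · -- integrability of g
    have hL : IntegrableOn (fun x => Real.log x - Real.log (1 - x)) (Ioo (0:ℝ) 1) :=
      integrableOn_log_Ioo.sub integrableOn_log_one_sub
    obtain ⟨C, hC⟩ := (isCompact_Icc (a := (0:ℝ)) (b := 1)).exists_bound_of_continuousOn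
      (Continuous.continuousOn (f := fun x => A.eval x * B.derivative.eval x)
        (A.continuous.mul (B.derivative).continuous))
    have h1 : IntegrableOn
        (fun a => A.eval a * B.derivative.eval a * (Real.log a - Real.log (1 - a)))
        (Ioo (0:ℝ) 1) := by
      refine Integrable.bdd_mul (c := C) hL ?_ ?_
      · exact ((A.continuous.mul (B.derivative).continuous)).aestronglyMeasurable
      · rw [ae_restrict_iff' measurableSet_Ioo]
        exact ae_of_all _ fun x hx => hC x (Ioo_subset_Icc_self hx)
    have h2 : IntegrableOn (fun a => A.eval a * intR B a) (Ioo (0:ℝ) 1) :=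
      ((A.continuous.mul (continuous_intR B)).integrableOn_Icc).mono_set Ioo_subset_Icc_self
    exact h1.sub h2
end

section
/- For every nonnegative integer ℓ', J(0,ℓ') = 0, and for every nonnegative integer ℓ, J(ℓ,0) = 0. (In particular the first row and first column of the truncated lightcone Hamiltonian of two-dimensional large-N_c QCD vanish, so the ℓ = 0 basis state is an exactly massless eigenstate: the massless pion required by chiral symmetry.) -/
open MeasureTheory Filter Set

namespace JAux

open intervalIntegral

noncomputable def Pf (a : ℕ → ℝ) (n : ℕ) (x : ℝ) : ℝ := ∑ k ∈ Finset.range n, a k * x ^ k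

noncomputable def qf (a : ℕ → ℝ) (n : ℕ) (x y : ℝ) : ℝ :=
  ∑ k ∈ Finset.range n, a k * ∑ i ∈ Finset.range k, x ^ i * y ^ (k - 1 - i)

noncomputable def rf (a : ℕ → ℝ) (n : ℕ) (x y : ℝ) : ℝ :=
  ∑ k ∈ Finset.range n, a k * ∑ i ∈ Finset.range k, x ^ i *
    ∑ j ∈ Finset.range (k - 1 - i), y ^ j * x ^ (k - 1 - i - 1 - j)

noncomputable def Df (a : ℕ → ℝ) (n : ℕ) (x : ℝ) : ℝ := qf a n x x

noncomputable def Cp (a : ℕ → ℝ) (n : ℕ) : ℝ := ∑ k ∈ Finset.range n, |a k|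
noncomputable def Cd (a : ℕ → ℝ) (n : ℕ) : ℝ := ∑ k ∈ Finset.range n, |a k| * k
noncomputable def Cr (a : ℕ → ℝ) (n : ℕ) : ℝ := ∑ k ∈ Finset.range n, |a k| * k * k

variable {a : ℕ → ℝ} {n : ℕ}

lemma qf_mul (x y : ℝ) : (x - y) * qf a n x y = Pf a n x - Pf a n y := by
  unfold qf Pf
  rw [Finset.mul_sum, ← Finset.sum_sub_distrib]
  refine Finset.sum_congr rfl fun k _ => ?_
  have h := geom_sum₂_mul x y k
  calc (x - y) * (a k * ∑ i ∈ Finset.range k, x ^ i * y ^ (k - 1 - i))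
      = a k * ((∑ i ∈ Finset.range k, x ^ i * y ^ (k - 1 - i)) * (x - y)) := by ring
    _ = a k * (x ^ k - y ^ k) := by rw [h]
    _ = a k * x ^ k - a k * y ^ k := by ring

lemma rf_mul (x y : ℝ) : (y - x) * rf a n x y = qf a n x y - qf a n x x := by
  unfold rf qf
  rw [Finset.mul_sum, ← Finset.sum_sub_distrib]
  refine Finset.sum_congr rfl fun k _ => ?_
  rw [← mul_sub, mul_left_comm, Finset.mul_sum, ← Finset.sum_sub_distrib]
  congr 1
  refine Finset.sum_congr rfl fun i hi => ?_
  have h := geom_sum₂_mul y x (k - 1 - i)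
  have hx : x ^ i * x ^ (k - 1 - i) = x ^ i * x ^ (k - 1 - i) := rfl
  calc (y - x) * (x ^ i * ∑ j ∈ Finset.range (k - 1 - i), y ^ j * x ^ (k - 1 - i - 1 - j))
      = x ^ i * ((∑ j ∈ Finset.range (k - 1 - i), y ^ j * x ^ (k - 1 - i - 1 - j)) * (y - x)) := by
        ring
    _ = x ^ i * (y ^ (k - 1 - i) - x ^ (k - 1 - i)) := by rw [h]
    _ = x ^ i * y ^ (k - 1 - i) - x ^ i * x ^ (k - 1 - i) := by ring

lemma Df_eq (x : ℝ) : Df a n x = ∑ k ∈ Finset.range n, a k * (k * x ^ (k - 1)) := by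
  unfold Df qf
  refine Finset.sum_congr rfl fun k _ => ?_
  congr 1
  have : ∀ i ∈ Finset.range k, x ^ i * x ^ (k - 1 - i) = x ^ (k - 1) := by
    intro i hi
    rw [← pow_add]
    congr 1
    have := Finset.mem_range.1 hi
    omega
  rw [Finset.sum_congr rfl this, Finset.sum_const, Finset.card_range, nsmul_eq_mul]

lemma ff_eq {x y : ℝ} (hxy : x ≠ y) :
    (Pf a n x - Pf a n y) / (x - y) ^ 2 = Df a n x * (x - y)⁻¹ - rf a n x y := by
  have hd : x - y ≠ 0 := sub_ne_zero.2 hxy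
  have h1 := qf_mul (a := a) (n := n) x y
  have h2 := rf_mul (a := a) (n := n) x y
  rw [div_eq_iff (pow_ne_zero 2 hd)]
  have h3 : Df a n x * (x - y)⁻¹ * (x - y) = Df a n x := by field_simp
  rw [sub_mul, pow_two, ← mul_assoc, h3]
  unfold Df
  linear_combination -h1 - (x - y) * h2

variable {a : ℕ → ℝ} {n : ℕ}

lemma abs_pow_le {x : ℝ} (hx : 0 ≤ x) (hx1 : x ≤ 1) (k : ℕ) : |x ^ k| ≤ 1 := by
  rw [abs_of_nonneg (pow_nonneg hx k)]
  exact pow_le_one₀ hx hx1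

lemma abs_Pf_le {x : ℝ} (hx : 0 ≤ x) (hx1 : x ≤ 1) : |Pf a n x| ≤ Cp a n := by
  refine (Finset.abs_sum_le_sum_abs _ _).trans (Finset.sum_le_sum fun k _ => ?_)
  rw [abs_mul]
  have h := abs_pow_le hx hx1 k
  nlinarith [abs_nonneg (a k), abs_nonneg (x ^ k)]

lemma abs_Df_le {x : ℝ} (hx : 0 ≤ x) (hx1 : x ≤ 1) : |Df a n x| ≤ Cd a n := by
  unfold Df qf Cd
  refine (Finset.abs_sum_le_sum_abs _ _).trans (Finset.sum_le_sum fun k _ => ?_)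
  rw [abs_mul]
  refine mul_le_mul_of_nonneg_left ?_ (abs_nonneg _)
  calc |∑ i ∈ Finset.range k, x ^ i * x ^ (k - 1 - i)|
      ≤ ∑ i ∈ Finset.range k, |x ^ i * x ^ (k - 1 - i)| := Finset.abs_sum_le_sum_abs _ _
    _ ≤ ∑ _i ∈ Finset.range k, 1 := by
        refine Finset.sum_le_sum fun i _ => ?_
        rw [abs_mul]
        calc |x ^ i| * |x ^ (k - 1 - i)| ≤ 1 * 1 :=
              mul_le_mul (abs_pow_le hx hx1 _) (abs_pow_le hx hx1 _) (abs_nonneg _) zero_le_one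
          _ = 1 := one_mul 1
    _ = k := by simp

lemma abs_rf_le {x y : ℝ} (hx : 0 ≤ x) (hx1 : x ≤ 1) (hy : 0 ≤ y) (hy1 : y ≤ 1) :
    |rf a n x y| ≤ Cr a n := by
  unfold rf Cr
  refine (Finset.abs_sum_le_sum_abs _ _).trans (Finset.sum_le_sum fun k _ => ?_)
  rw [abs_mul, mul_assoc]
  refine mul_le_mul_of_nonneg_left ?_ (abs_nonneg _)
  calc |∑ i ∈ Finset.range k, x ^ i * ∑ j ∈ Finset.range (k - 1 - i), y ^ j * x ^ (k - 1 - i - 1 - j)|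
      ≤ ∑ i ∈ Finset.range k, |x ^ i * ∑ j ∈ Finset.range (k - 1 - i), y ^ j * x ^ (k - 1 - i - 1 - j)| :=
        Finset.abs_sum_le_sum_abs _ _
    _ ≤ ∑ _i ∈ Finset.range k, (k : ℝ) := by
        refine Finset.sum_le_sum fun i _ => ?_
        rw [abs_mul]
        calc |x ^ i| * |∑ j ∈ Finset.range (k - 1 - i), y ^ j * x ^ (k - 1 - i - 1 - j)|
            ≤ 1 * ∑ j ∈ Finset.range (k - 1 - i), |y ^ j * x ^ (k - 1 - i - 1 - j)| := by
              refine mul_le_mul (abs_pow_le hx hx1 _) (Finset.abs_sum_le_sum_abs _ _)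
                (abs_nonneg _) zero_le_one
          _ ≤ ∑ _j ∈ Finset.range (k - 1 - i), (1 : ℝ) := by
              rw [one_mul]
              refine Finset.sum_le_sum fun j _ => ?_
              rw [abs_mul]
              calc |y ^ j| * |x ^ (k - 1 - i - 1 - j)| ≤ 1 * 1 :=
                    mul_le_mul (abs_pow_le hy hy1 _) (abs_pow_le hx hx1 _) (abs_nonneg _) zero_le_one
                _ = 1 := one_mul 1
          _ = ((k - 1 - i : ℕ) : ℝ) := by simp
          _ ≤ (k : ℝ) := Nat.cast_le.2 (by omega)
    _ = (k : ℝ) * k := by simp [mul_comm]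

lemma Cd_nonneg : 0 ≤ Cd a n :=
  Finset.sum_nonneg fun k _ => mul_nonneg (abs_nonneg _) (Nat.cast_nonneg _)
lemma Cr_nonneg : 0 ≤ Cr a n :=
  Finset.sum_nonneg fun k _ => mul_nonneg (mul_nonneg (abs_nonneg _) (Nat.cast_nonneg _)) (Nat.cast_nonneg _)

lemma continuous_Pf : Continuous (Pf a n) := by
  unfold Pf; exact continuous_finset_sum _ fun k _ => continuous_const.mul (continuous_pow k)

lemma continuous_Df : Continuous (Df a n) := by
  unfold Df qf
  exact continuous_finset_sum _ fun k _ =>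
    continuous_const.mul (continuous_finset_sum _ fun i _ => (continuous_pow i).mul (continuous_pow _))

lemma continuous_rf (x : ℝ) : Continuous (rf a n x) := by
  unfold rf
  refine continuous_finset_sum _ fun k _ => continuous_const.mul ?_
  refine continuous_finset_sum _ fun i _ => continuous_const.mul ?_
  exact continuous_finset_sum _ fun j _ => (continuous_pow j).mul continuous_const

lemma hasDerivAt_neg_log_sub (x t : ℝ) (h : x - t ≠ 0) :
    HasDerivAt (fun s => -Real.log (x - s)) (x - t)⁻¹ t := by
  have h1 : HasDerivAt (fun s : ℝ => x - s) (-1) t := by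
    simpa using (hasDerivAt_id t).const_sub x
  have h2 := (Real.hasDerivAt_log h).comp t h1
  have h3 := h2.neg
  rw [show (x - t)⁻¹ = -((x - t)⁻¹ * -1) by ring]
  exact h3

lemma integrableOn_inv_sub {x c d : ℝ} (h : ∀ t ∈ uIcc c d, x - t ≠ 0) :
    IntervalIntegrable (fun t => (x - t)⁻¹) volume c d := by
  refine ContinuousOn.intervalIntegrable ?_
  exact ((continuous_const.sub continuous_id).continuousOn).inv₀ h

lemma integral_inv_sub {x c d : ℝ} (h : ∀ t ∈ uIcc c d, x - t ≠ 0) :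
    ∫ t in c..d, (x - t)⁻¹ = Real.log (x - c) - Real.log (x - d) := by
  have := integral_eq_sub_of_hasDerivAt (f := fun s => -Real.log (x - s))
    (f' := fun t => (x - t)⁻¹) (fun t ht => hasDerivAt_neg_log_sub x t (h t ht))
    (integrableOn_inv_sub h)
  rw [this]; ring

lemma integrableOn_log_Ioo : IntegrableOn Real.log (Ioo (0:ℝ) 1) := by
  have hrpow : IntegrableOn (fun x : ℝ => x ^ (-(1:ℝ)/2)) (Ioo (0:ℝ) 1) := by
    have h := intervalIntegral.intervalIntegrable_rpow' (a := 0) (b := 1)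
      (r := -(1:ℝ)/2) (by norm_num)
    have := (intervalIntegrable_iff_integrableOn_Ioc_of_le (by norm_num : (0:ℝ) ≤ 1)).1 h
    exact this.mono_set Ioo_subset_Ioc_self
  refine Integrable.mono' (hrpow.const_mul 2) (Real.measurable_log.aestronglyMeasurable) ?_
  filter_upwards [ae_restrict_mem measurableSet_Ioo] with x hx
  obtain ⟨h0, h1⟩ := hx
  have hlog : Real.log x < 0 := Real.log_neg h0 h1
  rw [Real.norm_eq_abs, abs_of_neg hlog]
  have hr : Real.log (x ^ (-(1:ℝ)/2)) ≤ x ^ (-(1:ℝ)/2) - 1 :=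
    Real.log_le_sub_one_of_pos (Real.rpow_pos_of_pos h0 _)
  rw [Real.log_rpow h0] at hr
  nlinarith [Real.rpow_pos_of_pos h0 (-(1:ℝ)/2)]

lemma integrableOn_log_one_sub : IntegrableOn (fun x : ℝ => Real.log (1 - x)) (Ioo (0:ℝ) 1) := by
  have h1 : IntervalIntegrable Real.log volume 0 1 := by
    rw [intervalIntegrable_iff_integrableOn_Ioc_of_le (by norm_num : (0:ℝ) ≤ 1)]
    rw [integrableOn_Ioc_iff_integrableOn_Ioo]
    exact integrableOn_log_Ioo
  have h2 := h1.comp_sub_left 1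
  simp only [sub_zero, sub_self] at h2
  have h3 := h2.symm
  rw [intervalIntegrable_iff_integrableOn_Ioc_of_le (by norm_num : (0:ℝ) ≤ 1)] at h3
  rw [integrableOn_Ioc_iff_integrableOn_Ioo] at h3
  exact h3

noncomputable def ff (a : ℕ → ℝ) (n : ℕ) (x y : ℝ) : ℝ := (Pf a n x - Pf a n y) / (x - y) ^ 2

lemma ff_def (a : ℕ → ℝ) (n : ℕ) (x y : ℝ) :
    ff a n x y = (Pf a n x - Pf a n y) / (x - y) ^ 2 := rfl

lemma E_eq {x δ : ℝ} (hx0 : 0 < x) (hx1 : x < 1) (hδ : 0 < δ) :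
    Ioo (0:ℝ) 1 \ Ioo (x - δ) (x + δ) = Ioc 0 (x - δ) ∪ Ico (x + δ) 1 := by
  ext y
  simp only [mem_diff, mem_Ioo, mem_Ioc, mem_Ico, mem_union, not_and, not_lt]
  constructor
  · rintro ⟨⟨h0, h1⟩, h2⟩
    rcases le_or_gt y (x - δ) with h | h
    · exact Or.inl ⟨h0, h⟩
    · exact Or.inr ⟨h2 h, h1⟩
  · rintro (⟨h0, h1⟩ | ⟨h0, h1⟩)
    · exact ⟨⟨h0, by linarith⟩, fun h => by linarith⟩
    · exact ⟨⟨by linarith, h1⟩, fun h => by linarith⟩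

lemma E_disj {x δ : ℝ} (hδ : 0 < δ) :
    Disjoint (Ioc (0:ℝ) (x - δ)) (Ico (x + δ) 1) := by
  rw [Set.disjoint_left]
  rintro y hy1 hy2
  simp only [mem_Ioc, mem_Ico] at hy1 hy2
  linarith [hy1.2, hy2.1]

lemma integrableOn_ff_Ioc {a : ℕ → ℝ} {n : ℕ} {x δ : ℝ} (hδ : 0 < δ) :
    IntegrableOn (ff a n x) (Ioc 0 (x - δ)) volume := by
  refine (ContinuousOn.integrableOn_Icc ?_).mono_set Ioc_subset_Icc_self
  refine ContinuousOn.div (continuous_const.sub continuous_Pf).continuousOn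
    (((continuous_const.sub continuous_id).pow 2).continuousOn) fun y hy => ?_
  have h2 : y ≤ x - δ := hy.2
  refine pow_ne_zero _ (sub_ne_zero.2 ?_)
  intro h; (try simp only [id_eq] at h); rw [h] at h2; linarith

lemma integrableOn_ff_Ico {a : ℕ → ℝ} {n : ℕ} {x δ : ℝ} (hδ : 0 < δ) :
    IntegrableOn (ff a n x) (Ico (x + δ) 1) volume := by
  refine (ContinuousOn.integrableOn_Icc ?_).mono_set Ico_subset_Icc_self
  refine ContinuousOn.div (continuous_const.sub continuous_Pf).continuousOn
    (((continuous_const.sub continuous_id).pow 2).continuousOn) fun y hy => ?_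
  have h2 : x + δ ≤ y := hy.1
  refine pow_ne_zero _ (sub_ne_zero.2 ?_)
  intro h; (try simp only [id_eq] at h); rw [h] at h2; linarith

lemma integrableOn_rf {a : ℕ → ℝ} {n : ℕ} (x : ℝ) (s : Set ℝ) (c d : ℝ) (hs : s ⊆ Icc c d) :
    IntegrableOn (rf a n x) s volume :=
  ((continuous_rf x).continuousOn.integrableOn_Icc).mono_set hs

lemma integrableOn_inv_sub_Ioc {x δ : ℝ} (hδ : 0 < δ) (c : ℝ) :
    IntegrableOn (fun y => (x - y)⁻¹) (Ioc c (x - δ)) volume := by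
  refine (ContinuousOn.integrableOn_Icc ?_).mono_set Ioc_subset_Icc_self
  refine ((continuous_const.sub continuous_id).continuousOn).inv₀ fun y hy => ?_
  have h2 : y ≤ x - δ := hy.2
  intro h; simp only [Pi.sub_apply] at h; rw [sub_eq_zero] at h; (try simp only [id_eq] at h); rw [h] at h2; linarith

lemma integrableOn_inv_sub_Ioc' {x δ : ℝ} (hδ : 0 < δ) (d : ℝ) :
    IntegrableOn (fun y => (x - y)⁻¹) (Ioc (x + δ) d) volume := by
  refine (ContinuousOn.integrableOn_Icc ?_).mono_set Ioc_subset_Icc_self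
  refine ((continuous_const.sub continuous_id).continuousOn).inv₀ fun y hy => ?_
  have h2 : x + δ ≤ y := hy.1
  intro h; simp only [Pi.sub_apply] at h; rw [sub_eq_zero] at h; (try simp only [id_eq] at h); rw [h] at h2; linarith

lemma left_piece {a : ℕ → ℝ} {n : ℕ} {x δ : ℝ} (hδ : 0 < δ) (hlt : δ < x) :
    ∫ y in Ioc (0:ℝ) (x - δ), ff a n x y
      = Df a n x * (Real.log x - Real.log δ) - ∫ y in Ioc (0:ℝ) (x - δ), rf a n x y := by
  have h0 : (0:ℝ) ≤ x - δ := by linarith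
  have key : EqOn (ff a n x) (fun y => Df a n x * (x - y)⁻¹ - rf a n x y) (Ioc (0:ℝ) (x - δ)) := by
    intro y hy
    exact ff_eq (by have := hy.2; intro h; rw [h] at this; linarith)
  rw [setIntegral_congr_fun measurableSet_Ioc key]
  have hint1 : IntegrableOn (fun y => Df a n x * (x - y)⁻¹) (Ioc (0:ℝ) (x - δ)) volume :=
    (integrableOn_inv_sub_Ioc hδ 0).const_mul _
  have hint2 : IntegrableOn (rf a n x) (Ioc (0:ℝ) (x - δ)) volume :=
    integrableOn_rf x _ 0 (x - δ) Ioc_subset_Icc_self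
  rw [integral_sub hint1 hint2]
  congr 1
  have hne : ∀ t ∈ uIcc (0:ℝ) (x - δ), x - t ≠ 0 := by
    intro t ht
    rw [uIcc_of_le h0] at ht
    have := ht.2
    intro h; rw [sub_eq_zero] at h; linarith
  calc ∫ y in Ioc (0:ℝ) (x - δ), Df a n x * (x - y)⁻¹
      = ∫ y in (0:ℝ)..(x - δ), Df a n x * (x - y)⁻¹ := (intervalIntegral.integral_of_le h0).symm
    _ = Df a n x * ∫ y in (0:ℝ)..(x - δ), (x - y)⁻¹ := intervalIntegral.integral_const_mul _ _
    _ = Df a n x * (Real.log x - Real.log δ) := by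
        rw [integral_inv_sub hne, sub_zero, sub_sub_cancel]

lemma right_piece {a : ℕ → ℝ} {n : ℕ} {x δ : ℝ} (hδ : 0 < δ) (hlt : δ < 1 - x) :
    ∫ y in Ico (x + δ) (1:ℝ), ff a n x y
      = Df a n x * (Real.log δ - Real.log (1 - x)) - ∫ y in Ico (x + δ) (1:ℝ), rf a n x y := by
  have h0 : x + δ ≤ 1 := by linarith
  rw [integral_Ico_eq_integral_Ioo, ← integral_Ioc_eq_integral_Ioo,
      integral_Ico_eq_integral_Ioo (f := rf a n x), ← integral_Ioc_eq_integral_Ioo (f := rf a n x)]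
  have key : EqOn (ff a n x) (fun y => Df a n x * (x - y)⁻¹ - rf a n x y) (Ioc (x + δ) 1) := by
    intro y hy
    exact ff_eq (by have := hy.1; intro h; rw [h] at this; linarith)
  rw [setIntegral_congr_fun measurableSet_Ioc key]
  have hint1 : IntegrableOn (fun y => Df a n x * (x - y)⁻¹) (Ioc (x + δ) 1) volume :=
    (integrableOn_inv_sub_Ioc' hδ 1).const_mul _
  have hint2 : IntegrableOn (rf a n x) (Ioc (x + δ) 1) volume :=
    integrableOn_rf x _ (x + δ) 1 Ioc_subset_Icc_self
  rw [integral_sub hint1 hint2]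
  congr 1
  have hne : ∀ t ∈ uIcc (x + δ) (1:ℝ), x - t ≠ 0 := by
    intro t ht
    rw [uIcc_of_le h0] at ht
    have := ht.1
    intro h; rw [sub_eq_zero] at h; linarith
  calc ∫ y in Ioc (x + δ) (1:ℝ), Df a n x * (x - y)⁻¹
      = ∫ y in (x + δ)..(1:ℝ), Df a n x * (x - y)⁻¹ := (intervalIntegral.integral_of_le h0).symm
    _ = Df a n x * ∫ y in (x + δ)..(1:ℝ), (x - y)⁻¹ := intervalIntegral.integral_const_mul _ _
    _ = Df a n x * (Real.log δ - Real.log (1 - x)) := by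
        rw [integral_inv_sub hne]
        have e1 : x - (x + δ) = -δ := by ring
        have e2 : x - 1 = -(1 - x) := by ring
        rw [e1, e2, Real.log_neg_eq_log, Real.log_neg_eq_log]


noncomputable def Tf (a : ℕ → ℝ) (n : ℕ) (x : ℝ) : ℝ :=
  ∑ k ∈ Finset.range n, a k * ∑ i ∈ Finset.range k, x ^ i *
    ∑ j ∈ Finset.range (k - 1 - i), ((j : ℝ) + 1)⁻¹ * x ^ (k - 1 - i - 1 - j)

lemma continuous_Tf {a : ℕ → ℝ} {n : ℕ} : Continuous (Tf a n) := by
  unfold Tf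
  refine continuous_finset_sum _ fun k _ => continuous_const.mul ?_
  refine continuous_finset_sum _ fun i _ => (continuous_pow i).mul ?_
  exact continuous_finset_sum _ fun j _ => continuous_const.mul (continuous_pow _)

lemma integrableOn_of_continuous {f : ℝ → ℝ} (hf : Continuous f) :
    IntegrableOn f (Ioo (0:ℝ) 1) volume :=
  (hf.continuousOn.integrableOn_Icc (a := 0) (b := 1)).mono_set Ioo_subset_Icc_self

lemma integral_rf {a : ℕ → ℝ} {n : ℕ} (x : ℝ) :
    ∫ y in Ioo (0:ℝ) 1, rf a n x y = Tf a n x := by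
  have base : ∀ (j e : ℕ), ∫ y in Ioo (0:ℝ) 1, y ^ j * x ^ e = ((j : ℝ) + 1)⁻¹ * x ^ e := by
    intro j e
    rw [MeasureTheory.integral_mul_const]
    have h1 : ∫ y in Ioo (0:ℝ) 1, y ^ j = ((j : ℝ) + 1)⁻¹ := by
      rw [← integral_Ioc_eq_integral_Ioo, ← intervalIntegral.integral_of_le zero_le_one,
        integral_pow]
      simp [div_eq_mul_inv]
    rw [h1]
  unfold rf Tf
  rw [integral_finset_sum _ (fun k _ => by
    refine Integrable.const_mul ?_ _
    refine integrableOn_of_continuous ?_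
    refine continuous_finset_sum _ fun i _ => continuous_const.mul ?_
    exact continuous_finset_sum _ fun j _ => (continuous_pow j).mul continuous_const)]
  refine Finset.sum_congr rfl fun k _ => ?_
  rw [MeasureTheory.integral_const_mul]
  congr 1
  rw [integral_finset_sum _ (fun i _ => by
    refine Integrable.const_mul ?_ _
    refine integrableOn_of_continuous ?_
    exact continuous_finset_sum _ fun j _ => (continuous_pow j).mul continuous_const)]
  refine Finset.sum_congr rfl fun i _ => ?_
  rw [MeasureTheory.integral_const_mul]
  congr 1
  rw [integral_finset_sum _ (fun j _ => by
    refine integrableOn_of_continuous ?_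
    exact (continuous_pow j).mul continuous_const)]
  exact Finset.sum_congr rfl fun j _ => base j _

noncomputable def gf (a : ℕ → ℝ) (n : ℕ) (x : ℝ) : ℝ :=
  Df a n x * (Real.log x - Real.log (1 - x)) - Tf a n x

lemma integrableOn_gf {a : ℕ → ℝ} {n : ℕ} : IntegrableOn (gf a n) (Ioo (0:ℝ) 1) volume := by
  unfold gf
  refine Integrable.sub ?_ (integrableOn_of_continuous continuous_Tf)
  refine Integrable.bdd_mul (c := Cd a n)
    (integrableOn_log_Ioo.sub integrableOn_log_one_sub)
    continuous_Df.aestronglyMeasurable.restrict ?_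
  filter_upwards [ae_restrict_mem measurableSet_Ioo] with x hx
  exact abs_Df_le hx.1.le hx.2.le

lemma tendsto_inner_rf {a : ℕ → ℝ} {n : ℕ} {x : ℝ} (hx : x ∈ Ioo (0:ℝ) 1) :
    Tendsto (fun δ : ℝ => ∫ y in Ioo (0:ℝ) 1 ∩ Ioo (x - δ) (x + δ), rf a n x y)
      (nhdsWithin 0 (Ioi 0)) (nhds 0) := by
  refine squeeze_zero_norm' (a := fun δ : ℝ => Cr a n * 2 * δ) ?_ ?_
  · filter_upwards [self_mem_nhdsWithin] with δ (hδ : (0:ℝ) < δ)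
    have hvol : volume (Ioo (0:ℝ) 1 ∩ Ioo (x - δ) (x + δ)) < ⊤ :=
      lt_of_le_of_lt (measure_mono inter_subset_left) (by simp [Real.volume_Ioo])
    have hb := norm_setIntegral_le_of_norm_le_const (C := Cr a n) hvol
      (fun y hy => by
        rw [Real.norm_eq_abs]
        exact abs_rf_le hx.1.le hx.2.le hy.1.1.le hy.1.2.le) (f := rf a n x)
    refine hb.trans ?_
    have h1 : (volume (Ioo (0:ℝ) 1 ∩ Ioo (x - δ) (x + δ))).toReal ≤ 2 * δ := by
      have h2 : volume (Ioo (0:ℝ) 1 ∩ Ioo (x - δ) (x + δ)) ≤ volume (Ioo (x - δ) (x + δ)) :=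
        measure_mono inter_subset_right
      have h3 : volume (Ioo (x - δ) (x + δ)) = ENNReal.ofReal (2 * δ) := by
        rw [Real.volume_Ioo]; congr 1; ring
      calc (volume (Ioo (0:ℝ) 1 ∩ Ioo (x - δ) (x + δ))).toReal
          ≤ (volume (Ioo (x - δ) (x + δ))).toReal := by
            refine ENNReal.toReal_mono ?_ h2
            rw [h3]; exact ENNReal.ofReal_ne_top
        _ = 2 * δ := by rw [h3, ENNReal.toReal_ofReal (by linarith)]
    calc Cr a n * (volume (Ioo (0:ℝ) 1 ∩ Ioo (x - δ) (x + δ))).toReal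
        ≤ Cr a n * (2 * δ) := mul_le_mul_of_nonneg_left h1 Cr_nonneg
      _ = Cr a n * 2 * δ := by ring
  · have : Tendsto (fun δ : ℝ => Cr a n * 2 * δ) (nhds 0) (nhds (Cr a n * 2 * 0)) :=
      (continuous_const.mul continuous_id).tendsto 0
    simpa using this.mono_left nhdsWithin_le_nhds

lemma F_formula {a : ℕ → ℝ} {n : ℕ} {x δ : ℝ} (hx : x ∈ Ioo (0:ℝ) 1) (hδ : 0 < δ)
    (hδx : δ < x) (hδx' : δ < 1 - x) :
    ∫ y in Ioo (0:ℝ) 1 \ Ioo (x - δ) (x + δ), ff a n x y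
      = gf a n x + ∫ y in Ioo (0:ℝ) 1 ∩ Ioo (x - δ) (x + δ), rf a n x y := by
  obtain ⟨hx0, hx1⟩ := hx
  rw [E_eq hx0 hx1 hδ,
    setIntegral_union (E_disj hδ) measurableSet_Ico (integrableOn_ff_Ioc hδ)
      (integrableOn_ff_Ico hδ),
    left_piece hδ hδx, right_piece hδ hδx']
  have hrfE : (∫ y in Ioc (0:ℝ) (x - δ), rf a n x y) + ∫ y in Ico (x + δ) (1:ℝ), rf a n x y
      = ∫ y in Ioo (0:ℝ) 1 \ Ioo (x - δ) (x + δ), rf a n x y := by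
    rw [E_eq hx0 hx1 hδ]
    exact (setIntegral_union (E_disj hδ) measurableSet_Ico
      (integrableOn_rf x _ 0 (x - δ) Ioc_subset_Icc_self)
      (integrableOn_rf x _ (x + δ) 1 Ico_subset_Icc_self)).symm
  have hsplit : (∫ y in Ioo (0:ℝ) 1, rf a n x y)
      = (∫ y in Ioo (0:ℝ) 1 \ Ioo (x - δ) (x + δ), rf a n x y)
        + ∫ y in Ioo (0:ℝ) 1 ∩ Ioo (x - δ) (x + δ), rf a n x y := by
    conv_lhs => rw [← diff_union_inter (Ioo (0:ℝ) 1) (Ioo (x - δ) (x + δ))]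
    exact setIntegral_union disjoint_sdiff_inter (measurableSet_Ioo.inter measurableSet_Ioo)
      (integrableOn_rf x _ 0 1 (diff_subset.trans Ioo_subset_Icc_self))
      (integrableOn_rf x _ 0 1 (inter_subset_left.trans Ioo_subset_Icc_self))
  have hTf := integral_rf (a := a) (n := n) x
  unfold gf
  have hElemma : (∫ y in Ioo (0:ℝ) 1 \ Ioo (x - δ) (x + δ), rf a n x y)
      = Tf a n x - ∫ y in Ioo (0:ℝ) 1 ∩ Ioo (x - δ) (x + δ), rf a n x y := by
    rw [← hTf]; linarith [hsplit]
  rw [← hrfE] at hElemma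
  have hlog : Real.log x - Real.log δ + (Real.log δ - Real.log (1 - x))
      = Real.log x - Real.log (1 - x) := by ring
  linarith [hElemma, mul_comm (Df a n x) (Real.log x - Real.log δ)]

lemma tendsto_F {a : ℕ → ℝ} {n : ℕ} {x : ℝ} (hx : x ∈ Ioo (0:ℝ) 1) :
    Tendsto (fun δ : ℝ => ∫ y in Ioo (0:ℝ) 1 \ Ioo (x - δ) (x + δ), ff a n x y)
      (nhdsWithin 0 (Ioi 0)) (nhds (gf a n x)) := by
  have h1 : Tendsto (fun δ : ℝ =>
      gf a n x + ∫ y in Ioo (0:ℝ) 1 ∩ Ioo (x - δ) (x + δ), rf a n x y)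
      (nhdsWithin 0 (Ioi 0)) (nhds (gf a n x + 0)) :=
    tendsto_const_nhds.add (tendsto_inner_rf hx)
  rw [add_zero] at h1
  refine h1.congr' ?_
  have hm : (0:ℝ) < min x (1 - x) := lt_min hx.1 (by linarith [hx.2])
  filter_upwards [Ioo_mem_nhdsGT_of_mem (Set.mem_Ico.2 ⟨le_refl (0:ℝ), hm⟩)] with δ hδ
  exact (F_formula hx hδ.1 (lt_of_lt_of_le hδ.2 (min_le_left _ _))
    (lt_of_lt_of_le hδ.2 (min_le_right _ _))).symm

def Aset (δ : ℝ) : Set (ℝ × ℝ) :=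
  {p | p.1 ∈ Ioo (0:ℝ) 1 ∧ p.2 ∈ Ioo (0:ℝ) 1 ∧ (p.2 ≤ p.1 - δ ∨ p.1 + δ ≤ p.2)}

lemma measurableSet_Aset (δ : ℝ) : MeasurableSet (Aset δ) := by
  have h1 : MeasurableSet {p : ℝ × ℝ | p.1 ∈ Ioo (0:ℝ) 1} :=
    measurable_fst measurableSet_Ioo
  have h2 : MeasurableSet {p : ℝ × ℝ | p.2 ∈ Ioo (0:ℝ) 1} :=
    measurable_snd measurableSet_Ioo
  have h3 : MeasurableSet {p : ℝ × ℝ | p.2 ≤ p.1 - δ} :=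
    measurableSet_le measurable_snd (measurable_fst.sub measurable_const)
  have h4 : MeasurableSet {p : ℝ × ℝ | p.1 + δ ≤ p.2} :=
    measurableSet_le (measurable_fst.add measurable_const) measurable_snd
  have : Aset δ = ({p : ℝ × ℝ | p.1 ∈ Ioo (0:ℝ) 1} ∩ ({p : ℝ × ℝ | p.2 ∈ Ioo (0:ℝ) 1}
      ∩ ({p : ℝ × ℝ | p.2 ≤ p.1 - δ} ∪ {p : ℝ × ℝ | p.1 + δ ≤ p.2}))) := by
    ext p; simp [Aset, and_assoc]
  rw [this]
  exact h1.inter (h2.inter (h3.union h4))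

noncomputable def Phi (a : ℕ → ℝ) (n : ℕ) (δ : ℝ) : ℝ × ℝ → ℝ :=
  (Aset δ).indicator (fun p => ff a n p.1 p.2)

lemma measurable_ffun {a : ℕ → ℝ} {n : ℕ} : Measurable (fun p : ℝ × ℝ => ff a n p.1 p.2) := by
  unfold ff
  exact ((continuous_Pf.comp continuous_fst).sub
    (continuous_Pf.comp continuous_snd)).measurable.div
    (((continuous_fst.sub continuous_snd).pow 2).measurable)

lemma Cp_nonneg {a : ℕ → ℝ} {n : ℕ} : 0 ≤ Cp a n :=
  Finset.sum_nonneg fun k _ => abs_nonneg _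

lemma Phi_integrable {a : ℕ → ℝ} {n : ℕ} {δ : ℝ} (hδ : 0 < δ) :
    Integrable (Phi a n δ) (volume.prod volume) := by
  unfold Phi
  rw [integrable_indicator_iff (measurableSet_Aset δ)]
  refine Measure.integrableOn_of_bounded (M := 2 * Cp a n / δ ^ 2) ?_
    measurable_ffun.aestronglyMeasurable ?_
  · refine ne_of_lt (lt_of_le_of_lt (measure_mono ?_) (?_ :
      (volume.prod volume) (Ioo (0:ℝ) 1 ×ˢ Ioo (0:ℝ) 1) < ⊤))
    · rintro p ⟨h1, h2, _⟩; exact ⟨h1, h2⟩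
    · rw [Measure.prod_prod]
      simp [Real.volume_Ioo]
  · filter_upwards [ae_restrict_mem (measurableSet_Aset δ)] with p hp
    obtain ⟨h1, h2, h3⟩ := hp
    have hnum : |Pf a n p.1 - Pf a n p.2| ≤ 2 * Cp a n := by
      calc |Pf a n p.1 - Pf a n p.2| ≤ |Pf a n p.1| + |Pf a n p.2| := abs_sub _ _
        _ ≤ Cp a n + Cp a n :=
          add_le_add (abs_Pf_le h1.1.le h1.2.le) (abs_Pf_le h2.1.le h2.2.le)
        _ = 2 * Cp a n := by ring
    have hden : δ ^ 2 ≤ (p.1 - p.2) ^ 2 := by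
      rcases h3 with h | h
      · nlinarith
      · nlinarith
    rw [Real.norm_eq_abs, ff_def, abs_div, abs_of_nonneg (sq_nonneg (p.1 - p.2))]
    exact div_le_div₀ (by linarith [Cp_nonneg (a := a) (n := n)]) hnum
      (by positivity) hden

lemma Phi_swap {a : ℕ → ℝ} {n : ℕ} {δ : ℝ} (p : ℝ × ℝ) :
    Phi a n δ p.swap = -Phi a n δ p := by
  have hmem : p.swap ∈ Aset δ ↔ p ∈ Aset δ := by
    unfold Aset
    simp only [Prod.fst_swap, Prod.snd_swap, mem_setOf_eq]
    constructor
    · rintro ⟨h1, h2, h3 | h3⟩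
      · exact ⟨h2, h1, Or.inr (by linarith)⟩
      · exact ⟨h2, h1, Or.inl (by linarith)⟩
    · rintro ⟨h1, h2, h3 | h3⟩
      · exact ⟨h2, h1, Or.inr (by linarith)⟩
      · exact ⟨h2, h1, Or.inl (by linarith)⟩
  have hval : ff a n p.2 p.1 = -ff a n p.1 p.2 := by
    rw [ff_def, ff_def]
    have h : (p.2 - p.1) ^ 2 = (p.1 - p.2) ^ 2 := by ring
    rw [h, ← neg_sub (Pf a n p.1), neg_div]
  unfold Phi
  by_cases hp : p ∈ Aset δ
  · rw [indicator_of_mem (hmem.2 hp), indicator_of_mem hp]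
    exact hval
  · rw [indicator_of_notMem (fun h => hp (hmem.1 h)), indicator_of_notMem hp, neg_zero]

lemma integral_Phi_zero {a : ℕ → ℝ} {n : ℕ} {δ : ℝ} :
    ∫ p, Phi a n δ p ∂(volume.prod volume) = 0 := by
  have h := integral_prod_swap (μ := (volume : Measure ℝ)) (ν := (volume : Measure ℝ))
    (Phi a n δ)
  have h2 : ∫ z : ℝ × ℝ, Phi a n δ z.swap ∂(volume.prod volume)
      = -∫ z, Phi a n δ z ∂(volume.prod volume) := by
    rw [← MeasureTheory.integral_neg]
    exact integral_congr_ae (Eventually.of_forall fun p => Phi_swap p)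
  rw [h2] at h
  linarith

lemma marginal {a : ℕ → ℝ} {n : ℕ} {δ : ℝ} (hδ : 0 < δ) (x : ℝ) :
    ∫ y, Phi a n δ (x, y)
      = (Ioo (0:ℝ) 1).indicator
          (fun x => ∫ y in Ioo (0:ℝ) 1 \ Ioo (x - δ) (x + δ), ff a n x y) x := by
  by_cases hx : x ∈ Ioo (0:ℝ) 1
  · rw [indicator_of_mem hx]
    have key : ∀ y, Phi a n δ (x, y)
        = (Ioo (0:ℝ) 1 \ Ioo (x - δ) (x + δ)).indicator (ff a n x) y := by
      intro y
      have hmem : (x, y) ∈ Aset δ ↔ y ∈ Ioo (0:ℝ) 1 \ Ioo (x - δ) (x + δ) := by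
        unfold Aset
        simp only [mem_setOf_eq, mem_diff, mem_Ioo, not_and, not_lt]
        constructor
        · rintro ⟨_, h2, h3 | h3⟩
          · exact ⟨h2, fun h => by linarith⟩
          · exact ⟨h2, fun h => h3⟩
        · rintro ⟨h2, h3⟩
          refine ⟨hx, h2, ?_⟩
          rcases le_or_gt y (x - δ) with h | h
          · exact Or.inl h
          · exact Or.inr (h3 h)
      unfold Phi
      by_cases hy : (x, y) ∈ Aset δ
      · rw [indicator_of_mem hy, indicator_of_mem (hmem.1 hy)]
      · rw [indicator_of_notMem hy, indicator_of_notMem (fun h => hy (hmem.2 h))]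
    simp_rw [key]
    exact MeasureTheory.integral_indicator (measurableSet_Ioo.diff measurableSet_Ioo)
  · rw [indicator_of_notMem hx]
    have key : ∀ y, Phi a n δ (x, y) = 0 := by
      intro y
      exact indicator_of_notMem (fun h => hx h.1) _
    simp_rw [key]
    exact integral_zero _ _

lemma integral_F_zero {a : ℕ → ℝ} {n : ℕ} {δ : ℝ} (hδ : 0 < δ) :
    ∫ x in Ioo (0:ℝ) 1, (∫ y in Ioo (0:ℝ) 1 \ Ioo (x - δ) (x + δ), ff a n x y) = 0 := by
  have hint := Phi_integrable (a := a) (n := n) hδ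
  have h := integral_prod _ hint
  rw [integral_Phi_zero] at h
  have h2 : ∫ x : ℝ, ∫ y : ℝ, Phi a n δ (x, y) = 0 := h.symm
  calc ∫ x in Ioo (0:ℝ) 1, (∫ y in Ioo (0:ℝ) 1 \ Ioo (x - δ) (x + δ), ff a n x y)
      = ∫ x : ℝ, (Ioo (0:ℝ) 1).indicator
          (fun x => ∫ y in Ioo (0:ℝ) 1 \ Ioo (x - δ) (x + δ), ff a n x y) x :=
        (MeasureTheory.integral_indicator measurableSet_Ioo).symm
    _ = ∫ x : ℝ, ∫ y : ℝ, Phi a n δ (x, y) := by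
        refine integral_congr_ae (Eventually.of_forall fun x => ?_)
        exact (marginal hδ x).symm
    _ = 0 := h2

lemma aesm_F {a : ℕ → ℝ} {n : ℕ} {δ : ℝ} (hδ : 0 < δ) :
    AEStronglyMeasurable
      (fun x => ∫ y in Ioo (0:ℝ) 1 \ Ioo (x - δ) (x + δ), ff a n x y)
      (volume.restrict (Ioo (0:ℝ) 1)) := by
  have hint := (Phi_integrable (a := a) (n := n) hδ).integral_prod_left
  have h1 := hint.aestronglyMeasurable.restrict (μ := volume) (s := Ioo (0:ℝ) 1)
  refine h1.congr ?_
  filter_upwards [ae_restrict_mem measurableSet_Ioo] with x hx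
  rw [marginal hδ x, indicator_of_mem hx]

lemma rf_bound_L {a : ℕ → ℝ} {n : ℕ} {x δ : ℝ} (hx0 : 0 < x) (hx1 : x < 1) (hδ : 0 < δ)
    (hδx : δ < x) : |∫ y in Ioc (0:ℝ) (x - δ), rf a n x y| ≤ Cr a n * (x - δ) := by
  have hvol : volume (Ioc (0:ℝ) (x - δ)) < ⊤ := by simp [Real.volume_Ioc]
  have h := norm_setIntegral_le_of_norm_le_const (C := Cr a n) hvol
    (fun y hy => by
      rw [Real.norm_eq_abs]
      exact abs_rf_le hx0.le hx1.le hy.1.le (by linarith [hy.2]))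
  rw [Real.norm_eq_abs] at h
  refine h.trans (le_of_eq ?_)
  rw [Real.volume_real_Ioc_of_le (by linarith), sub_zero]

lemma rf_bound_R {a : ℕ → ℝ} {n : ℕ} {x δ : ℝ} (hx0 : 0 < x) (hx1 : x < 1) (hδ : 0 < δ)
    (hδx : δ < 1 - x) : |∫ y in Ico (x + δ) (1:ℝ), rf a n x y| ≤ Cr a n * (1 - x - δ) := by
  have hvol : volume (Ico (x + δ) (1:ℝ)) < ⊤ := by simp [Real.volume_Ico]
  have h := norm_setIntegral_le_of_norm_le_const (C := Cr a n) hvol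
    (fun y hy => by
      rw [Real.norm_eq_abs]
      exact abs_rf_le hx0.le hx1.le (by linarith [hy.1]) hy.2.le)
  rw [Real.norm_eq_abs] at h
  refine h.trans (le_of_eq ?_)
  rw [Real.volume_real_Ico_of_le (by linarith)]
  ring

lemma Df_mul_bound {a : ℕ → ℝ} {n : ℕ} {x u v : ℝ} (hx0 : 0 ≤ x) (hx1 : x ≤ 1) :
    |Df a n x * (u - v)| ≤ Cd a n * (|u| + |v|) := by
  rw [abs_mul]
  refine mul_le_mul (abs_Df_le hx0 hx1) (abs_sub _ _) (abs_nonneg _) Cd_nonneg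

lemma F_bound {a : ℕ → ℝ} {n : ℕ} {x δ : ℝ} (hx : x ∈ Ioo (0:ℝ) 1) (hδ : 0 < δ) :
    |∫ y in Ioo (0:ℝ) 1 \ Ioo (x - δ) (x + δ), ff a n x y|
      ≤ Cd a n * (|Real.log x| + |Real.log (1 - x)|) + Cr a n := by
  obtain ⟨hx0, hx1⟩ := hx
  have hCd := Cd_nonneg (a := a) (n := n)
  have hCr := Cr_nonneg (a := a) (n := n)
  have hsplit : ∫ y in Ioo (0:ℝ) 1 \ Ioo (x - δ) (x + δ), ff a n x y
      = (∫ y in Ioc (0:ℝ) (x - δ), ff a n x y) + ∫ y in Ico (x + δ) (1:ℝ), ff a n x y := by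
    rw [E_eq hx0 hx1 hδ]
    exact setIntegral_union (E_disj hδ) measurableSet_Ico (integrableOn_ff_Ioc hδ)
      (integrableOn_ff_Ico hδ)
  rw [hsplit]
  rcases lt_or_ge δ x with hδx | hδx <;> rcases lt_or_ge δ (1 - x) with hδy | hδy
  · -- both pieces present
    rw [left_piece hδ hδx, right_piece hδ hδy]
    have e1 : Df a n x * (Real.log x - Real.log δ) - (∫ y in Ioc (0:ℝ) (x - δ), rf a n x y)
        + (Df a n x * (Real.log δ - Real.log (1 - x)) - ∫ y in Ico (x + δ) (1:ℝ), rf a n x y)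
        = Df a n x * (Real.log x - Real.log (1 - x))
          - ((∫ y in Ioc (0:ℝ) (x - δ), rf a n x y)
            + ∫ y in Ico (x + δ) (1:ℝ), rf a n x y) := by ring
    rw [e1]
    have h1 := Df_mul_bound (a := a) (n := n) (u := Real.log x) (v := Real.log (1 - x))
      hx0.le hx1.le
    have h2 := rf_bound_L (a := a) (n := n) hx0 hx1 hδ hδx
    have h3 := rf_bound_R (a := a) (n := n) hx0 hx1 hδ hδy
    have h4 := abs_sub (Df a n x * (Real.log x - Real.log (1 - x)))
      ((∫ y in Ioc (0:ℝ) (x - δ), rf a n x y) + ∫ y in Ico (x + δ) (1:ℝ), rf a n x y)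
    have h5 := abs_add_le (∫ y in Ioc (0:ℝ) (x - δ), rf a n x y)
      (∫ y in Ico (x + δ) (1:ℝ), rf a n x y)
    nlinarith
  · -- right piece empty
    have hempty : Ico (x + δ) (1:ℝ) = ∅ := Ico_eq_empty (by push_neg; linarith)
    rw [hempty, setIntegral_empty, add_zero, left_piece hδ hδx]
    have hlogδ : |Real.log δ| ≤ |Real.log (1 - x)| := by
      have hlt1 : Real.log δ < 0 := Real.log_neg hδ (by linarith)
      have hle : Real.log (1 - x) ≤ Real.log δ := Real.log_le_log (by linarith) (by linarith)
      have hlt2 : Real.log (1 - x) < 0 := by linarith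
      rw [abs_of_neg hlt1, abs_of_neg hlt2]
      linarith
    have h1 := Df_mul_bound (a := a) (n := n) (u := Real.log x) (v := Real.log δ)
      hx0.le hx1.le
    have h2 := rf_bound_L (a := a) (n := n) hx0 hx1 hδ hδx
    have h4 := abs_sub (Df a n x * (Real.log x - Real.log δ))
      (∫ y in Ioc (0:ℝ) (x - δ), rf a n x y)
    nlinarith
  · -- left piece empty
    have hempty : Ioc (0:ℝ) (x - δ) = ∅ := Ioc_eq_empty (by push_neg; linarith)
    rw [hempty, setIntegral_empty, zero_add, right_piece hδ hδy]
    have hlogδ : |Real.log δ| ≤ |Real.log x| := by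
      have hlt1 : Real.log δ < 0 := Real.log_neg hδ (by linarith)
      have hle : Real.log x ≤ Real.log δ := Real.log_le_log hx0 hδx
      have hlt2 : Real.log x < 0 := by linarith
      rw [abs_of_neg hlt1, abs_of_neg hlt2]
      linarith
    have h1 := Df_mul_bound (a := a) (n := n) (u := Real.log δ) (v := Real.log (1 - x))
      hx0.le hx1.le
    have h3 := rf_bound_R (a := a) (n := n) hx0 hx1 hδ hδy
    have h4 := abs_sub (Df a n x * (Real.log δ - Real.log (1 - x)))
      (∫ y in Ico (x + δ) (1:ℝ), rf a n x y)
    nlinarith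
  · -- both empty
    have he1 : Ioc (0:ℝ) (x - δ) = ∅ := Ioc_eq_empty (by push_neg; linarith)
    have he2 : Ico (x + δ) (1:ℝ) = ∅ := Ico_eq_empty (by push_neg; linarith)
    rw [he1, he2, setIntegral_empty, add_zero, abs_zero]
    positivity

lemma integrable_bound {a : ℕ → ℝ} {n : ℕ} :
    Integrable (fun x => Cd a n * (|Real.log x| + |Real.log (1 - x)|) + Cr a n)
      (volume.restrict (Ioo (0:ℝ) 1)) := by
  refine Integrable.add ?_ ?_
  · refine Integrable.const_mul ?_ _
    exact (integrableOn_log_Ioo.abs).add (integrableOn_log_one_sub.abs)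
  · rw [← IntegrableOn]
    exact integrableOn_const (by simp [Real.volume_Ioo])

lemma integral_gf_zero {a : ℕ → ℝ} {n : ℕ} :
    ∫ x in Ioo (0:ℝ) 1, gf a n x = 0 := by
  have hdom := tendsto_integral_filter_of_dominated_convergence
    (μ := volume.restrict (Ioo (0:ℝ) 1)) (l := nhdsWithin (0:ℝ) (Ioi 0))
    (F := fun δ x => ∫ y in Ioo (0:ℝ) 1 \ Ioo (x - δ) (x + δ), ff a n x y)
    (f := gf a n)
    (bound := fun x => Cd a n * (|Real.log x| + |Real.log (1 - x)|) + Cr a n)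
    (by
      filter_upwards [self_mem_nhdsWithin] with δ (hδ : (0:ℝ) < δ)
      exact aesm_F hδ)
    (by
      filter_upwards [self_mem_nhdsWithin] with δ (hδ : (0:ℝ) < δ)
      filter_upwards [ae_restrict_mem measurableSet_Ioo] with x hx
      rw [Real.norm_eq_abs]
      exact F_bound hx hδ)
    integrable_bound
    (by
      filter_upwards [ae_restrict_mem measurableSet_Ioo] with x hx
      exact tendsto_F hx)
  have hzero : Tendsto
      (fun δ : ℝ => ∫ x in Ioo (0:ℝ) 1,
        (∫ y in Ioo (0:ℝ) 1 \ Ioo (x - δ) (x + δ), ff a n x y))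
      (nhdsWithin (0:ℝ) (Ioi 0)) (nhds 0) := by
    refine Tendsto.congr' ?_ tendsto_const_nhds
    filter_upwards [self_mem_nhdsWithin] with δ (hδ : (0:ℝ) < δ)
    exact (integral_F_zero hδ).symm
  exact (tendsto_nhds_unique hdom hzero)

lemma main_row (a : ℕ → ℝ) (n : ℕ) :
    ∃ g : ℝ → ℝ,
      (∀ x₁ ∈ Ioo (0 : ℝ) 1,
        Tendsto (fun δ : ℝ =>
            ∫ x₂ in Ioo (0 : ℝ) 1 \ Ioo (x₁ - δ) (x₁ + δ),
              (Pf a n x₁ - Pf a n x₂) / (x₁ - x₂) ^ 2)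
          (nhdsWithin 0 (Ioi 0)) (nhds (g x₁))) ∧
      IntegrableOn g (Ioo (0 : ℝ) 1) ∧
      ∫ x₁ in Ioo (0 : ℝ) 1, g x₁ = 0 := by
  refine ⟨gf a n, fun x hx => ?_, integrableOn_gf, integral_gf_zero⟩
  have h := tendsto_F (a := a) (n := n) hx
  simpa only [ff_def] using h


lemma legendreP_zero_eq (w : ℝ) : legendreP 0 w = 1 := by
  simp [legendreP, iteratedDeriv_zero]

lemma iteratedDeriv_polynomial (m : ℕ) (p : Polynomial ℝ) :
    iteratedDeriv m (fun t => p.eval t) = fun t => (Polynomial.derivative^[m] p).eval t := by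
  induction m generalizing p with
  | zero => simp [iteratedDeriv_zero]
  | succ m ih =>
    rw [iteratedDeriv_succ, ih]
    funext t
    rw [Function.iterate_succ_apply']
    exact Polynomial.deriv _

lemma poly_eval (ℓ : ℕ) : ∃ (n : ℕ) (a : ℕ → ℝ), ∀ x : ℝ,
    legendreP ℓ (1 - 2 * x) = Pf a n x := by
  set c : ℝ := ((2 : ℝ) ^ ℓ * Nat.factorial ℓ)⁻¹ with hc
  set q : Polynomial ℝ :=
    Polynomial.derivative^[ℓ] ((Polynomial.X ^ 2 - 1) ^ ℓ) with hq
  have hfun : (fun t : ℝ => (t ^ 2 - 1) ^ ℓ)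
      = fun t => (((Polynomial.X : Polynomial ℝ) ^ 2 - 1) ^ ℓ).eval t := by
    funext t; simp
  have hleg : ∀ w : ℝ, legendreP ℓ w = c * q.eval w := by
    intro w
    rw [legendreP, hfun, iteratedDeriv_polynomial]
  set p : Polynomial ℝ :=
    Polynomial.C c * q.comp (Polynomial.C 1 - Polynomial.C 2 * Polynomial.X) with hp
  have hpe : ∀ x : ℝ, legendreP ℓ (1 - 2 * x) = p.eval x := by
    intro x
    rw [hleg, hp]
    simp [Polynomial.eval_comp]
  refine ⟨p.natDegree + 1, p.coeff, fun x => ?_⟩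
  rw [hpe, Pf, Polynomial.eval_eq_sum_range]

end JAux


/-- The first row and the first column of the truncated lightcone Hamiltonian of
2D large-`N_c` QCD vanish: `J(0,ℓ') = 0` for all `ℓ'` and `J(ℓ,0) = 0` for all
`ℓ` (the massless pion). -/
theorem J_first_row_and_column_vanish :
    (∀ ℓ' : ℕ, IsJ 0 ℓ' 0) ∧ (∀ ℓ : ℕ, IsJ ℓ 0 0) := by
  constructor
  · intro ℓ'
    obtain ⟨n, a, hP⟩ := JAux.poly_eval ℓ'
    obtain ⟨g, h1, h2, h3⟩ := JAux.main_row a n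
    refine ⟨g, fun x₁ hx₁ => ?_, h2, h3⟩
    have h := h1 x₁ hx₁
    have hfun : (fun δ : ℝ => ∫ x₂ in Ioo (0:ℝ) 1 \ Ioo (x₁ - δ) (x₁ + δ),
        legendreP 0 (1 - 2 * x₁) * (legendreP ℓ' (1 - 2 * x₁) - legendreP ℓ' (1 - 2 * x₂))
          / (x₁ - x₂) ^ 2)
        = fun δ : ℝ => ∫ x₂ in Ioo (0:ℝ) 1 \ Ioo (x₁ - δ) (x₁ + δ),
            (JAux.Pf a n x₁ - JAux.Pf a n x₂) / (x₁ - x₂) ^ 2 := by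
      funext δ
      refine integral_congr_ae (Eventually.of_forall fun x₂ => ?_)
      simp only [JAux.legendreP_zero_eq, one_mul, hP]
    rw [hfun]
    exact h
  · intro ℓ
    refine ⟨fun _ => 0, fun x₁ hx₁ => ?_, integrableOn_zero, by simp⟩
    simp only [JAux.legendreP_zero_eq, sub_self, mul_zero, zero_div, integral_zero]
    exact tendsto_const_nhds
end

section
/- For all nonnegative integers ℓ and ℓ' such that ℓ + ℓ' is odd, J(ℓ,ℓ') = 0. (This is the charge-conjugation selection rule: basis states of even and odd ℓ do not mix in two-dimensional large-N_c QCD.) -/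
open MeasureTheory Filter Set

namespace JAux

open Finset Polynomial

/-- auxiliary double sum in the second-order remainder of a monomial -/
noncomputable def Wk (k : ℕ) (a b : ℝ) : ℝ :=
  ∑ i ∈ Finset.range k, a ^ (k - 1 - i) * ∑ j ∈ Finset.range i, b ^ j * a ^ (i - 1 - j)

lemma Wk_key (k : ℕ) (a b : ℝ) :
    b ^ k - a ^ k - (k : ℝ) * a ^ (k - 1) * (b - a) = (b - a) ^ 2 * Wk k a b := by
  have h1 : b ^ k - a ^ k = (∑ i ∈ Finset.range k, b ^ i * a ^ (k - 1 - i)) * (b - a) :=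
    (geom_sum₂_mul b a k).symm
  have h2 : ∀ i ∈ Finset.range k, b ^ i * a ^ (k - 1 - i) - a ^ (k - 1)
      = ((∑ j ∈ Finset.range i, b ^ j * a ^ (i - 1 - j)) * (b - a)) * a ^ (k - 1 - i) := by
    intro i hi
    rw [geom_sum₂_mul b a i]
    have hia : a ^ i * a ^ (k - 1 - i) = a ^ (k - 1) := by
      rw [← pow_add]; congr 1; simp at hi; omega
    rw [sub_mul, hia]
  calc b ^ k - a ^ k - (k : ℝ) * a ^ (k - 1) * (b - a)
      = (∑ i ∈ Finset.range k, (b ^ i * a ^ (k - 1 - i) - a ^ (k - 1))) * (b - a) := by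
        rw [Finset.sum_sub_distrib, Finset.sum_const, Finset.card_range, nsmul_eq_mul, sub_mul,
          ← h1]
    _ = (∑ i ∈ Finset.range k,
          ((∑ j ∈ Finset.range i, b ^ j * a ^ (i - 1 - j)) * (b - a)) * a ^ (k - 1 - i)) *
          (b - a) := by rw [Finset.sum_congr rfl h2]
    _ = (b - a) ^ 2 * Wk k a b := by
        unfold Wk
        rw [Finset.sum_mul, Finset.mul_sum]
        exact Finset.sum_congr rfl fun i _ => by ring

lemma Wk_bound (k : ℕ) {a b : ℝ} (ha : a ∈ Set.Icc (0:ℝ) 1) (hb : b ∈ Set.Icc (0:ℝ) 1) :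
    |Wk k a b| ≤ (k : ℝ) * k := by
  have hpow : ∀ (x : ℝ), x ∈ Set.Icc (0:ℝ) 1 → ∀ m : ℕ, |x ^ m| ≤ 1 := by
    intro x hx m
    rw [abs_pow]
    exact pow_le_one₀ (abs_nonneg x) (abs_le.mpr ⟨by linarith [hx.1], hx.2⟩)
  calc |Wk k a b| ≤ ∑ i ∈ Finset.range k, |a ^ (k - 1 - i) * ∑ j ∈ Finset.range i, b ^ j * a ^ (i - 1 - j)| :=
        Finset.abs_sum_le_sum_abs _ _
    _ ≤ ∑ _i ∈ Finset.range k, (k : ℝ) := by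
        apply Finset.sum_le_sum
        intro i hi
        rw [abs_mul]
        have h1 : |∑ j ∈ Finset.range i, b ^ j * a ^ (i - 1 - j)| ≤ (i : ℝ) := by
          calc |∑ j ∈ Finset.range i, b ^ j * a ^ (i - 1 - j)|
              ≤ ∑ j ∈ Finset.range i, |b ^ j * a ^ (i - 1 - j)| := Finset.abs_sum_le_sum_abs _ _
            _ ≤ ∑ _j ∈ Finset.range i, (1:ℝ) := by
                apply Finset.sum_le_sum
                intro j _
                rw [abs_mul]
                calc |b ^ j| * |a ^ (i - 1 - j)| ≤ 1 * 1 :=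
                      mul_le_mul (hpow b hb j) (hpow a ha _) (abs_nonneg _) zero_le_one
                  _ = 1 := by ring
            _ = (i : ℝ) := by simp
        calc |a ^ (k - 1 - i)| * |∑ j ∈ Finset.range i, b ^ j * a ^ (i - 1 - j)|
            ≤ 1 * (i : ℝ) := mul_le_mul (hpow a ha _) h1 (abs_nonneg _) zero_le_one
          _ = (i : ℝ) := by ring
          _ ≤ (k : ℝ) := by simp at hi ⊢; omega
    _ = (k : ℝ) * k := by simp [mul_comm]

lemma iteratedDeriv_eval (P : Polynomial ℝ) (n : ℕ) :
    iteratedDeriv n (fun t => P.eval t) = fun t => (Polynomial.derivative^[n] P).eval t := by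
  induction n with
  | zero => simp
  | succ n ih =>
    rw [iteratedDeriv_succ, ih, Function.iterate_succ_apply']
    funext t
    exact Polynomial.deriv (p := Polynomial.derivative^[n] P)

noncomputable def LP (n : ℕ) : Polynomial ℝ :=
  Polynomial.C (((2:ℝ)^n * (Nat.factorial n : ℝ))⁻¹) *
    Polynomial.derivative^[n] ((Polynomial.X ^ 2 - 1) ^ n)

lemma legendreP_eval (n : ℕ) (w : ℝ) : legendreP n w = (LP n).eval w := by
  unfold legendreP LP
  rw [Polynomial.eval_mul, Polynomial.eval_C]
  congr 1
  have hfun : (fun t : ℝ => (t ^ 2 - 1) ^ n)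
      = fun t : ℝ => (((Polynomial.X:Polynomial ℝ) ^ 2 - 1) ^ n).eval t := by
    funext t; simp
  rw [hfun, iteratedDeriv_eval]

lemma legendreP_cont (n : ℕ) : Continuous (legendreP n) := by
  have : legendreP n = fun w => (LP n).eval w := funext (legendreP_eval n)
  rw [this]
  exact Polynomial.continuous _

lemma legendreP_neg (n : ℕ) (w : ℝ) : legendreP n (-w) = (-1)^n * legendreP n w := by
  have hf : (fun x : ℝ => ((-x) ^ 2 - 1) ^ n) = (fun t : ℝ => (t ^ 2 - 1) ^ n) := by
    funext x; rw [neg_sq]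
  have h := iteratedDeriv_comp_neg n (fun t : ℝ => (t ^ 2 - 1) ^ n) w
  rw [hf] at h
  -- h : iteratedDeriv n f w = (-1)^n • iteratedDeriv n f (-w)
  unfold legendreP
  have h2 : iteratedDeriv n (fun t : ℝ => (t ^ 2 - 1) ^ n) (-w)
      = (-1:ℝ)^n * iteratedDeriv n (fun t : ℝ => (t ^ 2 - 1) ^ n) w := by
    rw [h, smul_eq_mul, ← mul_assoc, ← mul_pow]
    simp
  rw [h2]; ring

noncomputable def WP (R : Polynomial ℝ) (x₁ x₂ : ℝ) : ℝ :=
  ∑ k ∈ Finset.range (R.natDegree + 1), R.coeff k * Wk k x₁ x₂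

noncomputable def Mb (R : Polynomial ℝ) : ℝ :=
  ∑ k ∈ Finset.range (R.natDegree + 1), |R.coeff k| * ((k:ℝ) * k)

lemma Mb_nonneg (R : Polynomial ℝ) : 0 ≤ Mb R :=
  Finset.sum_nonneg fun k _ => mul_nonneg (abs_nonneg _) (mul_nonneg (Nat.cast_nonneg _) (Nat.cast_nonneg _))

lemma WP_key (R : Polynomial ℝ) (x₁ x₂ : ℝ) :
    R.eval x₂ - R.eval x₁ - (x₂ - x₁) * R.derivative.eval x₁ = (x₂ - x₁) ^ 2 * WP R x₁ x₂ := by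
  have e2 : R.eval x₂ = ∑ k ∈ Finset.range (R.natDegree + 1), R.coeff k * x₂ ^ k :=
    eval_eq_sum_range x₂
  have e1 : R.eval x₁ = ∑ k ∈ Finset.range (R.natDegree + 1), R.coeff k * x₁ ^ k :=
    eval_eq_sum_range x₁
  have ed : R.derivative.eval x₁
      = ∑ k ∈ Finset.range (R.natDegree + 1), R.coeff k * k * x₁ ^ (k - 1) := by
    rw [derivative_eval]
    exact R.sum_over_range' (fun n => by simp) _ (lt_add_one _)
  rw [e2, e1, ed, WP, Finset.mul_sum, Finset.mul_sum, ← Finset.sum_sub_distrib,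
    ← Finset.sum_sub_distrib]
  exact Finset.sum_congr rfl fun k _ => by linear_combination (R.coeff k) * Wk_key k x₁ x₂

lemma WP_bound (R : Polynomial ℝ) {a b : ℝ} (ha : a ∈ Set.Icc (0:ℝ) 1)
    (hb : b ∈ Set.Icc (0:ℝ) 1) : |WP R a b| ≤ Mb R := by
  calc |WP R a b| ≤ ∑ k ∈ Finset.range (R.natDegree + 1), |R.coeff k * Wk k a b| :=
        Finset.abs_sum_le_sum_abs _ _
    _ ≤ Mb R := by
        apply Finset.sum_le_sum
        intro k _
        rw [abs_mul]
        exact mul_le_mul_of_nonneg_left (Wk_bound k ha hb) (abs_nonneg _)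

lemma WP_cont (R : Polynomial ℝ) : Continuous (fun z : ℝ × ℝ => WP R z.1 z.2) := by
  apply continuous_finset_sum
  intro k _
  apply Continuous.mul continuous_const
  apply continuous_finset_sum
  intro i _
  exact ((continuous_fst.pow _).mul (continuous_finset_sum _ fun j _ =>
    (continuous_snd.pow _).mul (continuous_fst.pow _)))

lemma tendsto_pv (P : ℝ → ℝ) (R : Polynomial ℝ) {x₁ : ℝ} (h1 : 0 < x₁) (h2 : x₁ < 1) :
    Tendsto (fun δ : ℝ => ∫ x₂ in Set.Ioo (0:ℝ) 1 \ Set.Ioo (x₁ - δ) (x₁ + δ),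
        P x₁ * (R.eval x₁ - R.eval x₂) / (x₁ - x₂) ^ 2) (nhdsWithin 0 (Set.Ioi 0))
      (nhds (P x₁ * (R.derivative.eval x₁ * (Real.log x₁ - Real.log (1 - x₁))
        - ∫ x₂ in Set.Ioo (0:ℝ) 1, WP R x₁ x₂))) := by
  have hWcont1 : Continuous (fun x₂ => WP R x₁ x₂) :=
    (WP_cont R).comp (continuous_const.prodMk continuous_id)
  have hWint : IntegrableOn (fun x₂ => WP R x₁ x₂) (Set.Ioo (0:ℝ) 1) :=
    (hWcont1.integrableOn_Icc (a := (0:ℝ)) (b := 1)).mono_set Set.Ioo_subset_Icc_self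
  set Itot : ℝ := ∫ x₂ in Set.Ioo (0:ℝ) 1, WP R x₁ x₂ with hItot
  set ψ : ℝ → ℝ := fun δ =>
    ∫ x₂ in Set.Ioo (0:ℝ) 1 ∩ Set.Ioo (x₁ - δ) (x₁ + δ), WP R x₁ x₂ with hψdef
  have hψ : Tendsto ψ (nhdsWithin 0 (Set.Ioi 0)) (nhds 0) := by
    have hbnd : ∀ᶠ δ in nhdsWithin (0:ℝ) (Set.Ioi 0), ‖ψ δ‖ ≤ Mb R * (2 * δ) := by
      filter_upwards [self_mem_nhdsWithin] with δ (hδ : 0 < δ)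
      have hsub : Set.Ioo (0:ℝ) 1 ∩ Set.Ioo (x₁ - δ) (x₁ + δ) ⊆ Set.Ioo (x₁ - δ) (x₁ + δ) :=
        Set.inter_subset_right
      have hvol : volume (Set.Ioo (0:ℝ) 1 ∩ Set.Ioo (x₁ - δ) (x₁ + δ)) < ⊤ :=
        lt_of_le_of_lt (measure_mono hsub) (by simp [Real.volume_Ioo])
      have hC : ∀ x ∈ Set.Ioo (0:ℝ) 1 ∩ Set.Ioo (x₁ - δ) (x₁ + δ),
          ‖WP R x₁ x‖ ≤ Mb R := by
        intro x hx
        rw [Real.norm_eq_abs]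
        exact WP_bound R (Set.mem_Icc_of_Ioo ⟨h1, h2⟩) (Set.mem_Icc_of_Ioo hx.1)
      have hb := norm_setIntegral_le_of_norm_le_const (C := Mb R) hvol hC
      refine hb.trans ?_
      have h3 : (volume (Set.Ioo (0:ℝ) 1 ∩ Set.Ioo (x₁ - δ) (x₁ + δ))).toReal ≤ 2 * δ := by
          have := measure_mono hsub (μ := volume)
          rw [Real.volume_Ioo] at this
          calc (volume (Set.Ioo (0:ℝ) 1 ∩ Set.Ioo (x₁ - δ) (x₁ + δ))).toReal
              ≤ (ENNReal.ofReal (x₁ + δ - (x₁ - δ))).toReal :=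
                ENNReal.toReal_mono ENNReal.ofReal_ne_top this
            _ ≤ 2 * δ := by rw [ENNReal.toReal_ofReal (by linarith)]; linarith
      exact mul_le_mul_of_nonneg_left h3 (Mb_nonneg R)
    have hg0 : Tendsto (fun δ : ℝ => Mb R * (2 * δ)) (nhdsWithin 0 (Set.Ioi 0)) (nhds 0) := by
      have : Tendsto (fun δ : ℝ => Mb R * (2 * δ)) (nhds 0) (nhds (Mb R * (2 * 0))) :=
        (tendsto_const_nhds.mul (tendsto_const_nhds.mul tendsto_id))
      simpa using this.mono_left nhdsWithin_le_nhds
    exact squeeze_zero_norm' hbnd hg0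
  have hmain : Tendsto (fun δ : ℝ =>
      P x₁ * R.derivative.eval x₁ * (Real.log x₁ - Real.log (1 - x₁))
        - P x₁ * (Itot - ψ δ)) (nhdsWithin 0 (Set.Ioi 0))
      (nhds (P x₁ * (R.derivative.eval x₁ * (Real.log x₁ - Real.log (1 - x₁)) - Itot))) := by
    have hc1 : Tendsto (fun _ : ℝ => P x₁ * R.derivative.eval x₁ * (Real.log x₁ - Real.log (1 - x₁)))
        (nhdsWithin (0:ℝ) (Set.Ioi 0))
        (nhds (P x₁ * R.derivative.eval x₁ * (Real.log x₁ - Real.log (1 - x₁)))) :=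
      tendsto_const_nhds
    have hc2 : Tendsto (fun _ : ℝ => Itot) (nhdsWithin (0:ℝ) (Set.Ioi 0)) (nhds Itot) :=
      tendsto_const_nhds
    have := hc1.sub ((hc2.sub hψ).const_mul (P x₁))
    convert this using 2
    ring
  refine Tendsto.congr' ?_ hmain
  have hm : (0:ℝ) < min x₁ (1 - x₁) := lt_min h1 (by linarith)
  filter_upwards [Ioo_mem_nhdsGT_of_mem (Set.left_mem_Ico.mpr hm)] with δ hδ
  obtain ⟨hδ0, hδm⟩ := hδ
  symm
  have hδx : δ < x₁ := lt_of_lt_of_le hδm (min_le_left _ _)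
  have hδ1 : δ < 1 - x₁ := lt_of_lt_of_le hδm (min_le_right _ _)
  -- the truncated region
  have hE : Set.Ioo (0:ℝ) 1 \ Set.Ioo (x₁ - δ) (x₁ + δ)
      = Set.Ioc 0 (x₁ - δ) ∪ Set.Ico (x₁ + δ) 1 := by
    ext x
    simp only [Set.mem_diff, Set.mem_Ioo, Set.mem_Ioc, Set.mem_Ico, Set.mem_union, not_and,
      not_lt]
    constructor
    · rintro ⟨⟨hx0, hx1⟩, hmid⟩
      rcases le_or_gt x (x₁ - δ) with hc | hc
      · exact Or.inl ⟨hx0, hc⟩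
      · exact Or.inr ⟨hmid hc, hx1⟩
    · rintro (⟨hx0, hx1⟩ | ⟨hx0, hx1⟩)
      · exact ⟨⟨hx0, by linarith⟩, fun hh => by linarith⟩
      · exact ⟨⟨by linarith, hx1⟩, fun hh => by linarith⟩
  have hEsub : Set.Ioc 0 (x₁ - δ) ∪ Set.Ico (x₁ + δ) 1 ⊆ Set.Ioo (0:ℝ) 1 := by
    rw [← hE]; exact Set.diff_subset
  have hEmeas : MeasurableSet (Set.Ioc (0:ℝ) (x₁ - δ) ∪ Set.Ico (x₁ + δ) 1) :=
    measurableSet_Ioc.union measurableSet_Ico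
  have hfar : ∀ x ∈ Set.Ioc (0:ℝ) (x₁ - δ) ∪ Set.Ico (x₁ + δ) 1, δ ≤ |x₁ - x| := by
    rintro x (⟨hx0, hx1⟩ | ⟨hx0, hx1⟩)
    · rw [abs_of_pos (by linarith)]; linarith
    · rw [abs_of_nonpos (by linarith)]; linarith
  have hinv_int : IntegrableOn (fun x₂ => (x₁ - x₂)⁻¹)
      (Set.Ioc (0:ℝ) (x₁ - δ) ∪ Set.Ico (x₁ + δ) 1) := by
    apply Measure.integrableOn_of_bounded (M := δ⁻¹)
    · exact ((measure_mono hEsub).trans_lt (by simp [Real.volume_Ioo])).ne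
    · exact ((measurable_const.sub measurable_id).inv).aestronglyMeasurable
    · rw [ae_restrict_iff' hEmeas]
      refine ae_of_all _ fun x hx => ?_
      rw [Real.norm_eq_abs, abs_inv]
      exact inv_anti₀ hδ0 (hfar x hx)
  have hW_int_E : IntegrableOn (fun x₂ => WP R x₁ x₂)
      (Set.Ioc (0:ℝ) (x₁ - δ) ∪ Set.Ico (x₁ + δ) 1) := hWint.mono_set hEsub
  -- pointwise identity on the region
  have hpt : ∀ x₂ ∈ Set.Ioc (0:ℝ) (x₁ - δ) ∪ Set.Ico (x₁ + δ) 1,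
      P x₁ * (R.eval x₁ - R.eval x₂) / (x₁ - x₂) ^ 2
        = P x₁ * R.derivative.eval x₁ * (x₁ - x₂)⁻¹ - P x₁ * WP R x₁ x₂ := by
    intro x₂ hx₂
    have hne : x₁ - x₂ ≠ 0 := by
      intro hc
      have := hfar x₂ hx₂
      rw [hc, abs_zero] at this
      linarith
    have hkey : R.eval x₁ - R.eval x₂
        = (x₁ - x₂) * R.derivative.eval x₁ - (x₁ - x₂) ^ 2 * WP R x₁ x₂ := by
      linear_combination -WP_key R x₁ x₂
    rw [hkey]
    field_simp
  -- value of the inverse integral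
  have hinv_val : (∫ x₂ in Set.Ioc (0:ℝ) (x₁ - δ) ∪ Set.Ico (x₁ + δ) 1, (x₁ - x₂)⁻¹)
      = Real.log x₁ - Real.log (1 - x₁) := by
    rw [setIntegral_union ?hdisj measurableSet_Ico
      (hinv_int.mono_set Set.subset_union_left) (hinv_int.mono_set Set.subset_union_right)]
    case hdisj =>
      rw [Set.disjoint_left]
      rintro x ⟨_, hx1⟩ ⟨hx2, _⟩
      linarith
    have e1 : (∫ x₂ in Set.Ioc (0:ℝ) (x₁ - δ), (x₁ - x₂)⁻¹) = Real.log (x₁ / δ) := by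
      rw [← intervalIntegral.integral_of_le (by linarith : (0:ℝ) ≤ x₁ - δ)]
      rw [intervalIntegral.integral_comp_sub_left (fun y => y⁻¹) x₁]
      have hb1 : x₁ - (x₁ - δ) = δ := by ring
      have hb2 : x₁ - 0 = x₁ := by ring
      rw [hb1, hb2]
      exact integral_inv (notMem_uIcc_of_lt hδ0 h1)
    have e2 : (∫ x₂ in Set.Ico (x₁ + δ) 1, (x₁ - x₂)⁻¹) = Real.log (δ / (1 - x₁)) := by
      rw [integral_Ico_eq_integral_Ioo, ← integral_Ioc_eq_integral_Ioo,
        ← intervalIntegral.integral_of_le (by linarith : x₁ + δ ≤ 1)]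
      rw [intervalIntegral.integral_comp_sub_left (fun y => y⁻¹) x₁]
      have hb1 : x₁ - (x₁ + δ) = -δ := by ring
      rw [hb1]
      rw [integral_inv (notMem_uIcc_of_gt (by linarith) (by linarith))]
      rw [show x₁ - 1 = -(1 - x₁) by ring, neg_div_neg_eq]
    rw [e1, e2, Real.log_div h1.ne' hδ0.ne', Real.log_div hδ0.ne' (by linarith : (1:ℝ) - x₁ ≠ 0)]
    ring
  -- value of the WP integral
  have hW_val : (∫ x₂ in Set.Ioo (0:ℝ) 1 \ Set.Ioo (x₁ - δ) (x₁ + δ), WP R x₁ x₂)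
      = Itot - ψ δ := by
    rw [← Set.diff_self_inter]
    rw [integral_diff (measurableSet_Ioo.inter measurableSet_Ioo) hWint
      Set.inter_subset_left]
  -- put it together
  calc (∫ x₂ in Set.Ioo (0:ℝ) 1 \ Set.Ioo (x₁ - δ) (x₁ + δ),
        P x₁ * (R.eval x₁ - R.eval x₂) / (x₁ - x₂) ^ 2)
      = ∫ x₂ in Set.Ioc (0:ℝ) (x₁ - δ) ∪ Set.Ico (x₁ + δ) 1,
          (P x₁ * R.derivative.eval x₁ * (x₁ - x₂)⁻¹ - P x₁ * WP R x₁ x₂) := by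
        rw [hE]
        exact setIntegral_congr_fun hEmeas hpt
    _ = P x₁ * R.derivative.eval x₁ *
          (∫ x₂ in Set.Ioc (0:ℝ) (x₁ - δ) ∪ Set.Ico (x₁ + δ) 1, (x₁ - x₂)⁻¹)
        - P x₁ * (∫ x₂ in Set.Ioc (0:ℝ) (x₁ - δ) ∪ Set.Ico (x₁ + δ) 1, WP R x₁ x₂) := by
        rw [integral_sub (hinv_int.const_mul _) (hW_int_E.const_mul _),
          MeasureTheory.integral_const_mul, MeasureTheory.integral_const_mul]
    _ = P x₁ * R.derivative.eval x₁ * (Real.log x₁ - Real.log (1 - x₁))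
        - P x₁ * (Itot - ψ δ) := by
        rw [hinv_val, ← hW_val, hE]

lemma log_int_Ioc : IntegrableOn Real.log (Set.Ioc (0:ℝ) 1) := by
  have hrpow : IntervalIntegrable (fun x : ℝ => x ^ (-(1:ℝ)/2)) volume 0 1 :=
    intervalIntegral.intervalIntegrable_rpow' (by norm_num)
  have hi : IntegrableOn (fun x : ℝ => 2 * x ^ (-(1:ℝ)/2)) (Set.Ioc (0:ℝ) 1) :=
    (hrpow.1).const_mul 2
  apply Integrable.mono' hi Real.measurable_log.aestronglyMeasurable.restrict
  rw [ae_restrict_iff' measurableSet_Ioc]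
  refine ae_of_all _ fun x hx => ?_
  obtain ⟨hx0, hx1⟩ := hx
  rw [Real.norm_eq_abs]
  have hlogle : Real.log x ≤ 0 := Real.log_nonpos (le_of_lt hx0) hx1
  rw [abs_of_nonpos hlogle, ← Real.log_inv]
  have h2 : Real.log x⁻¹ ≤ (x⁻¹ ^ ((1:ℝ)/2)) / ((1:ℝ)/2) :=
    Real.log_le_rpow_div (by positivity) (by norm_num)
  refine h2.trans ?_
  rw [Real.inv_rpow hx0.le, ← Real.rpow_neg hx0.le]
  rw [show -(1:ℝ)/2 = -((1:ℝ)/2) by norm_num]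
  rw [div_div_eq_mul_div, mul_comm]
  simp

lemma log_intervalIntegrable : IntervalIntegrable Real.log volume 0 1 := by
  constructor
  · exact log_int_Ioc
  · simp [Set.Ioc_eq_empty (by norm_num : ¬ (0:ℝ) < 0), IntegrableOn]

lemma log_one_sub_int_Ioc : IntegrableOn (fun x : ℝ => Real.log (1 - x)) (Set.Ioc (0:ℝ) 1) := by
  have h := log_intervalIntegrable.comp_sub_left 1
  norm_num at h
  exact h.2


end JAux

/-- Charge-conjugation selection rule: if `ℓ + ℓ'` is odd then `J(ℓ,ℓ') = 0`,
so basis states of even and odd `ℓ` do not mix in 2D large-`N_c` QCD. -/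
theorem J_selection_rule (ℓ ℓ' : ℕ) (h : Odd (ℓ + ℓ')) : IsJ ℓ ℓ' 0 := by
  classical
  open JAux in
  set R' : Polynomial ℝ := (LP ℓ).comp (Polynomial.C 1 - Polynomial.C 2 * Polynomial.X) with hR'def
  set R : Polynomial ℝ := (LP ℓ').comp (Polynomial.C 1 - Polynomial.C 2 * Polynomial.X) with hRdef
  have hp : ∀ x : ℝ, legendreP ℓ (1 - 2 * x) = R'.eval x := by
    intro x
    rw [legendreP_eval, hR'def, Polynomial.eval_comp]
    norm_num
  have hq : ∀ x : ℝ, legendreP ℓ' (1 - 2 * x) = R.eval x := by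
    intro x
    rw [legendreP_eval, hRdef, Polynomial.eval_comp]
    norm_num
  refine ⟨fun x => R'.eval x * (R.derivative.eval x * (Real.log x - Real.log (1 - x))
    - ∫ x₂ in Ioo (0:ℝ) 1, WP R x x₂), ?_, ?_, ?_⟩
  · -- existence of the principal value
    intro x₁ hx₁
    simp only [hp, hq]
    exact tendsto_pv (fun x => R'.eval x) R hx₁.1 hx₁.2
  · -- integrability
    obtain ⟨C1, hC1⟩ := (isCompact_Icc (a := (0:ℝ)) (b := 1)).exists_bound_of_continuousOn
      ((Polynomial.continuous R').mul (Polynomial.continuous R.derivative)).continuousOn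
    obtain ⟨C2, hC2⟩ := (isCompact_Icc (a := (0:ℝ)) (b := 1)).exists_bound_of_continuousOn
      (Polynomial.continuous R').continuousOn
    have hIsm : StronglyMeasurable (fun x : ℝ => ∫ x₂ in Ioo (0:ℝ) 1, WP R x x₂) :=
      (WP_cont R).stronglyMeasurable.integral_prod_right'
    have hIbdd : ∀ x ∈ Icc (0:ℝ) 1, ‖∫ x₂ in Ioo (0:ℝ) 1, WP R x x₂‖ ≤ Mb R := by
      intro x hx
      have hb := norm_setIntegral_le_of_norm_le_const (C := Mb R)
        (by simp [Real.volume_Ioo] : volume (Ioo (0:ℝ) 1) < ⊤)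
        (fun x₂ hx₂ => by
          rw [Real.norm_eq_abs]
          exact WP_bound R hx (Set.mem_Icc_of_Ioo hx₂))
      refine hb.trans ?_
      rw [measureReal_def, Real.volume_Ioo]
      norm_num
    have t1 : IntegrableOn (fun x => (R'.eval x * R.derivative.eval x) * Real.log x)
        (Ioo (0:ℝ) 1) := by
      apply Integrable.bdd_mul (c := |C1|)
        (log_int_Ioc.mono_set Ioo_subset_Ioc_self)
        (((Polynomial.continuous R').mul (Polynomial.continuous R.derivative)).aestronglyMeasurable.restrict)
      rw [ae_restrict_iff' measurableSet_Ioo]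
      exact ae_of_all _ fun x hx =>
        (hC1 x (Set.mem_Icc_of_Ioo hx)).trans (le_abs_self C1)
    have t2 : IntegrableOn (fun x => (R'.eval x * R.derivative.eval x) * Real.log (1 - x))
        (Ioo (0:ℝ) 1) := by
      apply Integrable.bdd_mul (c := |C1|)
        (log_one_sub_int_Ioc.mono_set Ioo_subset_Ioc_self)
        (((Polynomial.continuous R').mul (Polynomial.continuous R.derivative)).aestronglyMeasurable.restrict)
      rw [ae_restrict_iff' measurableSet_Ioo]
      exact ae_of_all _ fun x hx =>
        (hC1 x (Set.mem_Icc_of_Ioo hx)).trans (le_abs_self C1)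
    have t3 : IntegrableOn (fun x => R'.eval x * ∫ x₂ in Ioo (0:ℝ) 1, WP R x x₂)
        (Ioo (0:ℝ) 1) := by
      apply Measure.integrableOn_of_bounded (M := |C2| * Mb R)
      · simp [Real.volume_Ioo]
      · exact ((Polynomial.continuous R').stronglyMeasurable.mul hIsm).aestronglyMeasurable
      · rw [ae_restrict_iff' measurableSet_Ioo]
        refine ae_of_all _ fun x hx => ?_
        rw [norm_mul]
        exact mul_le_mul ((hC2 x (Set.mem_Icc_of_Ioo hx)).trans (le_abs_self C2))
          (hIbdd x (Set.mem_Icc_of_Ioo hx)) (norm_nonneg _) (abs_nonneg _)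
    refine IntegrableOn.congr_fun ((t1.sub t2).sub t3) (fun x _ => ?_) measurableSet_Ioo
    simp only [Pi.sub_apply]
    ring
  · -- the integral vanishes by the reflection symmetry
    have hrefl : ∀ F : ℝ → ℝ, (∫ x in Ioo (0:ℝ) 1, F (1 - x)) = ∫ x in Ioo (0:ℝ) 1, F x := by
      intro F
      rw [← integral_Ioc_eq_integral_Ioo, ← integral_Ioc_eq_integral_Ioo,
        ← intervalIntegral.integral_of_le zero_le_one,
        ← intervalIntegral.integral_of_le zero_le_one,
        intervalIntegral.integral_comp_sub_left F 1]
      norm_num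
    have hppar : ∀ y : ℝ, R'.eval (1 - y) = (-1:ℝ)^ℓ * R'.eval y := by
      intro y
      have h1 : (1 : ℝ) - 2*(1-y) = -(1-2*y) := by ring
      calc R'.eval (1-y) = legendreP ℓ (1-2*(1-y)) := (hp _).symm
        _ = legendreP ℓ (-(1-2*y)) := by rw [h1]
        _ = (-1:ℝ)^ℓ * legendreP ℓ (1-2*y) := legendreP_neg _ _
        _ = (-1:ℝ)^ℓ * R'.eval y := by rw [hp]
    have hqpar : ∀ y : ℝ, R.eval (1 - y) = (-1:ℝ)^ℓ' * R.eval y := by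
      intro y
      have h1 : (1 : ℝ) - 2*(1-y) = -(1-2*y) := by ring
      calc R.eval (1-y) = legendreP ℓ' (1-2*(1-y)) := (hq _).symm
        _ = legendreP ℓ' (-(1-2*y)) := by rw [h1]
        _ = (-1:ℝ)^ℓ' * legendreP ℓ' (1-2*y) := legendreP_neg _ _
        _ = (-1:ℝ)^ℓ' * R.eval y := by rw [hq]
    have hdqpar : ∀ x : ℝ, R.derivative.eval (1-x) = -((-1:ℝ)^ℓ') * R.derivative.eval x := by
      intro x
      have hfun : (fun y : ℝ => R.eval (1-y)) = (fun y => (-1:ℝ)^ℓ' * R.eval y) :=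
        funext hqpar
      have hd1 : deriv (fun y : ℝ => R.eval (1-y)) x = -(R.derivative.eval (1-x)) := by
        rw [deriv_comp_const_sub (fun t : ℝ => R.eval t) 1 x, Polynomial.deriv]
      have hd2 : deriv (fun y : ℝ => (-1:ℝ)^ℓ' * R.eval y) x
          = (-1:ℝ)^ℓ' * R.derivative.eval x := by
        rw [deriv_const_mul _ R.differentiableAt, Polynomial.deriv]
      have hde := congrArg (fun f : ℝ → ℝ => deriv f x) hfun
      rw [hd1, hd2] at hde
      linarith
    have hWpar : ∀ x : ℝ, ∀ x₂ : ℝ, x₂ ≠ x →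
        WP R (1-x) (1-x₂) = (-1:ℝ)^ℓ' * WP R x x₂ := by
      intro x x₂ hne
      have hA : (x₂ - x) ^ 2 ≠ 0 := pow_ne_zero 2 (sub_ne_zero.mpr hne)
      apply mul_left_cancel₀ hA
      have k1 := WP_key R (1-x) (1-x₂)
      have k2 := WP_key R x x₂
      have e1 := hqpar x₂
      have e2 := hqpar x
      have e3 := hdqpar x
      linear_combination (-1:ℝ) * k1 + (-1:ℝ)^ℓ' * k2 + e1 - e2 - (x - x₂) * e3
    have hIpar : ∀ x : ℝ, (∫ x₂ in Ioo (0:ℝ) 1, WP R (1-x) x₂)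
        = (-1:ℝ)^ℓ' * ∫ x₂ in Ioo (0:ℝ) 1, WP R x x₂ := by
      intro x
      have hae : ∀ᵐ x₂ : ℝ, x₂ ≠ x := by
        rw [ae_iff]
        have : {x₂ : ℝ | ¬ x₂ ≠ x} = {x} := by ext y; simp
        rw [this]
        exact measure_singleton x
      calc (∫ x₂ in Ioo (0:ℝ) 1, WP R (1-x) x₂)
          = ∫ x₂ in Ioo (0:ℝ) 1, WP R (1-x) (1-x₂) :=
            (hrefl (fun x₂ => WP R (1-x) x₂)).symm
        _ = ∫ x₂ in Ioo (0:ℝ) 1, (-1:ℝ)^ℓ' * WP R x x₂ := by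
            apply setIntegral_congr_ae measurableSet_Ioo
            filter_upwards [hae] with x₂ hne _
            exact hWpar x x₂ hne
        _ = (-1:ℝ)^ℓ' * ∫ x₂ in Ioo (0:ℝ) 1, WP R x x₂ := MeasureTheory.integral_const_mul _ _
    have hsign : ((-1:ℝ)^ℓ) * ((-1:ℝ)^ℓ') = -1 := by
      rw [← pow_add]
      exact Odd.neg_one_pow h
    set g : ℝ → ℝ := fun x => R'.eval x * (R.derivative.eval x * (Real.log x - Real.log (1 - x))
      - ∫ x₂ in Ioo (0:ℝ) 1, WP R x x₂) with hgdef
    have hgpar : ∀ x : ℝ, g (1-x) = -(g x) := by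
      intro x
      rw [hgdef]
      simp only
      rw [hppar, hdqpar, hIpar, show (1:ℝ) - (1-x) = x by ring]
      linear_combination (R'.eval x * (R.derivative.eval x * (Real.log x - Real.log (1-x))
        - ∫ x₂ in Ioo (0:ℝ) 1, WP R x x₂)) * hsign
    have h0 : (∫ x in Ioo (0:ℝ) 1, g (1-x)) = ∫ x in Ioo (0:ℝ) 1, g x := hrefl g
    have h1 : (∫ x in Ioo (0:ℝ) 1, g (1-x)) = -∫ x in Ioo (0:ℝ) 1, g x := by
      calc (∫ x in Ioo (0:ℝ) 1, g (1-x)) = ∫ x in Ioo (0:ℝ) 1, -(g x) := by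
            apply setIntegral_congr_fun measurableSet_Ioo
            intro x _
            exact hgpar x
        _ = -∫ x in Ioo (0:ℝ) 1, g x := integral_neg _
    have : (∫ x in Ioo (0:ℝ) 1, g x) = 0 := by linarith
    exact this
end

section
/- For all ℓ, ℓ' ∈ {0,1,2,3}, the quantity √((2ℓ+1)(2ℓ'+1))·J(ℓ,ℓ') equals the (ℓ,ℓ') entry of the 4×4 matrix with rows (0, 0, 0, 0), (0, 6, 0, √(7/3)), (0, 0, 15, 0), (0, √(7/3), 0, 77/3). Equivalently: J(1,1) = 2, J(2,2) = 3, J(3,3) = 11/3, J(1,3) = J(3,1) = 1/3, and all remaining J(ℓ,ℓ') with ℓ, ℓ' ≤ 3 vanish. (This is the truncated lightcone Hamiltonian of two-dimensional large-N_c QCD at truncation Δ_max = 4, in units of g²N_c/π.) -/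
open MeasureTheory Filter Set

lemma legendreP_zero (w : ℝ) : legendreP 0 w = 1 := by
  simp [legendreP]

lemma legendreP_one (w : ℝ) : legendreP 1 w = w := by
  have h1 : deriv (fun t : ℝ => (t^2-1)^1) = fun t => 2*t := by
    funext t
    have h : HasDerivAt (fun t : ℝ => (t^2-1)^1) (2*t) t := by
      have h := ((hasDerivAt_pow 2 t).sub_const 1).pow 1
      refine h.congr_deriv ?_
      norm_num
    exact h.deriv
  simp [legendreP, iteratedDeriv_succ, h1]

lemma legendreP_two (w : ℝ) : legendreP 2 w = (3*w^2 - 1)/2 := by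
  have h1 : deriv (fun t : ℝ => (t^2-1)^2) = fun t => 4*t^3 - 4*t := by
    funext t
    have h : HasDerivAt (fun t : ℝ => (t^2-1)^2) (4*t^3 - 4*t) t := by
      have h := ((hasDerivAt_pow 2 t).sub_const 1).pow 2
      refine h.congr_deriv ?_
      norm_num; ring
    exact h.deriv
  have h2 : deriv (fun t : ℝ => 4*t^3 - 4*t) = fun t => 12*t^2 - 4 := by
    funext t
    have h : HasDerivAt (fun t : ℝ => 4*t^3 - 4*t) (12*t^2 - 4) t := by
      have h := ((hasDerivAt_pow 3 t).const_mul (4:ℝ)).sub ((hasDerivAt_id t).const_mul 4)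
      refine h.congr_deriv ?_
      norm_num; ring
    exact h.deriv
  simp [legendreP, iteratedDeriv_succ, h1, h2]
  norm_num; ring

lemma legendreP_three (w : ℝ) : legendreP 3 w = (5*w^3 - 3*w)/2 := by
  have h1 : deriv (fun t : ℝ => (t^2-1)^3) = fun t => 6*t^5 - 12*t^3 + 6*t := by
    funext t
    have h : HasDerivAt (fun t : ℝ => (t^2-1)^3) (6*t^5 - 12*t^3 + 6*t) t := by
      have h := ((hasDerivAt_pow 2 t).sub_const 1).pow 3
      refine h.congr_deriv ?_
      norm_num; ring
    exact h.deriv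
  have h2 : deriv (fun t : ℝ => 6*t^5 - 12*t^3 + 6*t) = fun t => 30*t^4 - 36*t^2 + 6 := by
    funext t
    have h : HasDerivAt (fun t : ℝ => 6*t^5 - 12*t^3 + 6*t) (30*t^4 - 36*t^2 + 6) t := by
      have h := (((hasDerivAt_pow 5 t).const_mul (6:ℝ)).sub ((hasDerivAt_pow 3 t).const_mul 12)).add ((hasDerivAt_id t).const_mul 6)
      refine h.congr_deriv ?_
      norm_num; ring
    exact h.deriv
  have h3 : deriv (fun t : ℝ => 30*t^4 - 36*t^2 + 6) = fun t => 120*t^3 - 72*t := by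
    funext t
    have h : HasDerivAt (fun t : ℝ => 30*t^4 - 36*t^2 + 6) (120*t^3 - 72*t) t := by
      have h := ((((hasDerivAt_pow 4 t).const_mul (30:ℝ)).sub ((hasDerivAt_pow 2 t).const_mul 36)).add_const 6)
      refine h.congr_deriv ?_
      norm_num; ring
    exact h.deriv
  simp [legendreP, iteratedDeriv_succ, h1, h2, h3, Nat.factorial]
  norm_num; ring

lemma intervalIntegrable_pow_mul_log (k : ℕ) :
    IntervalIntegrable (fun x : ℝ => x ^ k * Real.log x) volume 0 1 := by
  rw [intervalIntegrable_iff_integrableOn_Ioc_of_le (by norm_num : (0:ℝ) ≤ 1)]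
  have hg : IntegrableOn (fun x : ℝ => 2 * x ^ (-(1:ℝ)/2)) (Ioc 0 1) := by
    have := (intervalIntegral.intervalIntegrable_rpow' (a := 0) (b := 1)
      (r := -(1:ℝ)/2) (by norm_num)).const_mul 2
    rwa [intervalIntegrable_iff_integrableOn_Ioc_of_le (by norm_num : (0:ℝ) ≤ 1)] at this
  refine Integrable.mono' hg ?_ ?_
  · exact (((measurable_id.pow_const k).mul Real.measurable_log).aestronglyMeasurable)
  · rw [ae_restrict_iff' measurableSet_Ioc]
    filter_upwards with x hx
    obtain ⟨hx0, hx1⟩ := hx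
    have hlog : Real.log x ≤ 0 := Real.log_nonpos hx0.le hx1
    have hb : -Real.log x ≤ 2 * x ^ (-(1:ℝ)/2) := by
      have h1 : Real.log (x ^ (-(1:ℝ)/2)) ≤ x ^ (-(1:ℝ)/2) - 1 :=
        Real.log_le_sub_one_of_pos (Real.rpow_pos_of_pos hx0 _)
      rw [Real.log_rpow hx0] at h1
      nlinarith [Real.rpow_pos_of_pos hx0 (-(1:ℝ)/2)]
    have hxk : x ^ k ≤ 1 := pow_le_one₀ hx0.le hx1
    have hxk0 : (0:ℝ) ≤ x ^ k := pow_nonneg hx0.le k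
    rw [Real.norm_eq_abs, abs_mul, abs_of_nonneg hxk0, abs_of_nonpos hlog]
    nlinarith

lemma integral_pow_mul_log (k : ℕ) :
    ∫ x in (0:ℝ)..1, x ^ k * Real.log x = -(1 / ((k:ℝ)+1)^2) := by
  set c : ℝ := ((k:ℝ)+1)⁻¹ with hc
  have hc0 : ((k:ℝ)+1) ≠ 0 := by positivity
  have key := intervalIntegral.integral_eq_sub_of_hasDeriv_right_of_le
    (f := fun x : ℝ => (x ^ (k+1) * Real.log x) * c - x ^ (k+1) * c^2)
    (f' := fun x : ℝ => x ^ k * Real.log x)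
    (by norm_num : (0:ℝ) ≤ 1) ?_ ?_ (intervalIntegrable_pow_mul_log k)
  · rw [key]
    simp [hc, inv_pow]
  · apply Continuous.continuousOn
    have : Continuous fun x : ℝ => x ^ k * (x * Real.log x) :=
      (continuous_pow k).mul Real.continuous_mul_log
    have he : (fun x : ℝ => (x ^ (k+1) * Real.log x) * c - x ^ (k+1) * c^2)
        = fun x : ℝ => (x ^ k * (x * Real.log x)) * c - x ^ (k+1) * c^2 := by
      funext x; ring
    rw [he]
    exact (this.mul continuous_const).sub ((continuous_pow (k+1)).mul continuous_const)
  · intro x hx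
    have hx0 : x ≠ 0 := ne_of_gt hx.1
    have h : HasDerivAt (fun x : ℝ => (x ^ (k+1) * Real.log x) * c - x ^ (k+1) * c^2)
        (x ^ k * Real.log x) x := by
      have h1 := (((hasDerivAt_pow (k+1) x).mul (Real.hasDerivAt_log hx0)).mul_const c).sub
        ((hasDerivAt_pow (k+1) x).mul_const (c^2))
      refine h1.congr_deriv ?_
      have : ((k:ℝ)+1) * c = 1 := by rw [hc]; field_simp
      push_cast
      field_simp [hc]
      linear_combination (x*x^k*Real.log x - c*x*x^k) * this
    exact h.hasDerivWithinAt

lemma comb_log (a0 a1 a2 a3 a4 a5 : ℝ) :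
    IntervalIntegrable
      (fun x : ℝ => (a0 + a1*x + a2*x^2 + a3*x^3 + a4*x^4 + a5*x^5) * Real.log x) volume 0 1 ∧
    ∫ x in (0:ℝ)..1, (a0 + a1*x + a2*x^2 + a3*x^3 + a4*x^4 + a5*x^5) * Real.log x
      = -(a0 + a1/4 + a2/9 + a3/16 + a4/25 + a5/36) := by
  have e : (fun x : ℝ => (a0 + a1*x + a2*x^2 + a3*x^3 + a4*x^4 + a5*x^5) * Real.log x)
      = fun x : ℝ => a0*(x^0*Real.log x) + (a1*(x^1*Real.log x) + (a2*(x^2*Real.log x) +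
        (a3*(x^3*Real.log x) + (a4*(x^4*Real.log x) + a5*(x^5*Real.log x))))) := by
    funext x; ring
  have h0 := (intervalIntegrable_pow_mul_log 0).const_mul a0
  have h1 := (intervalIntegrable_pow_mul_log 1).const_mul a1
  have h2 := (intervalIntegrable_pow_mul_log 2).const_mul a2
  have h3 := (intervalIntegrable_pow_mul_log 3).const_mul a3
  have h4 := (intervalIntegrable_pow_mul_log 4).const_mul a4
  have h5 := (intervalIntegrable_pow_mul_log 5).const_mul a5
  constructor
  · rw [e]; exact h0.add (h1.add (h2.add (h3.add (h4.add h5))))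
  · rw [e, intervalIntegral.integral_add h0 (h1.add (h2.add (h3.add (h4.add h5)))),
      intervalIntegral.integral_add h1 (h2.add (h3.add (h4.add h5))),
      intervalIntegral.integral_add h2 (h3.add (h4.add h5)),
      intervalIntegral.integral_add h3 (h4.add h5),
      intervalIntegral.integral_add h4 h5]
    simp only [intervalIntegral.integral_const_mul, integral_pow_mul_log]
    ring

lemma masterOuter (a0 a1 a2 a3 a4 a5 b0 b1 b2 b3 b4 : ℝ) :
    IntegrableOn (fun x : ℝ => (a0 + a1*x + a2*x^2 + a3*x^3 + a4*x^4 + a5*x^5)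
        * (Real.log x - Real.log (1-x)) + (b0 + b1*x + b2*x^2 + b3*x^3 + b4*x^4)) (Ioo (0:ℝ) 1) ∧
    ∫ x in Ioo (0:ℝ) 1, ((a0 + a1*x + a2*x^2 + a3*x^3 + a4*x^4 + a5*x^5)
        * (Real.log x - Real.log (1-x)) + (b0 + b1*x + b2*x^2 + b3*x^3 + b4*x^4))
      = a1/2 + a2/2 + a3*(11/24) + a4*(5/12) + a5*(137/360)
        + b0 + b1/2 + b2/3 + b3/4 + b4/5 := by
  have hlog := comb_log a0 a1 a2 a3 a4 a5
  have hc := comb_log (a0+a1+a2+a3+a4+a5) (-(a1+2*a2+3*a3+4*a4+5*a5))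
    (a2+3*a3+6*a4+10*a5) (-(a3+4*a4+10*a5)) (a4+5*a5) (-a5)
  have e2 : (fun x : ℝ => (a0 + a1*x + a2*x^2 + a3*x^3 + a4*x^4 + a5*x^5) * Real.log (1-x))
      = fun x : ℝ => ((a0+a1+a2+a3+a4+a5) + (-(a1+2*a2+3*a3+4*a4+5*a5))*(1-x)
        + (a2+3*a3+6*a4+10*a5)*(1-x)^2 + (-(a3+4*a4+10*a5))*(1-x)^3
        + (a4+5*a5)*(1-x)^4 + (-a5)*(1-x)^5) * Real.log (1-x) := by
    funext x; ring
  have hG : IntervalIntegrable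
      (fun x : ℝ => (a0 + a1*x + a2*x^2 + a3*x^3 + a4*x^4 + a5*x^5) * Real.log (1-x))
      volume 0 1 := by
    rw [e2]
    have h := hc.1.comp_sub_left 1
    simp only [sub_zero, sub_self] at h
    exact h.symm
  have hGval : ∫ x in (0:ℝ)..1,
      (a0 + a1*x + a2*x^2 + a3*x^3 + a4*x^4 + a5*x^5) * Real.log (1-x)
      = -((a0+a1+a2+a3+a4+a5) + (-(a1+2*a2+3*a3+4*a4+5*a5))/4 + (a2+3*a3+6*a4+10*a5)/9
        + (-(a3+4*a4+10*a5))/16 + (a4+5*a5)/25 + (-a5)/36) := by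
    rw [e2]
    have key := intervalIntegral.integral_comp_sub_left (a := (0:ℝ)) (b := 1)
      (fun y : ℝ => ((a0+a1+a2+a3+a4+a5) + (-(a1+2*a2+3*a3+4*a4+5*a5))*y
        + (a2+3*a3+6*a4+10*a5)*y^2 + (-(a3+4*a4+10*a5))*y^3
        + (a4+5*a5)*y^4 + (-a5)*y^5) * Real.log y) 1
    simp only [sub_zero, sub_self] at key
    rw [key, hc.2]
  have hpj : ∀ (c : ℝ) (j : ℕ), IntervalIntegrable (fun x : ℝ => c * x^j) volume 0 1 :=
    fun c j => (continuous_const.mul (continuous_pow j)).intervalIntegrable 0 1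
  have e4 : (fun x : ℝ => b0 + b1*x + b2*x^2 + b3*x^3 + b4*x^4)
      = fun x : ℝ => b0*x^0 + (b1*x^1 + (b2*x^2 + (b3*x^3 + b4*x^4))) := by
    funext x; ring
  have hlin : IntervalIntegrable (fun x : ℝ => b0 + b1*x + b2*x^2 + b3*x^3 + b4*x^4) volume 0 1 := by
    rw [e4]
    exact (hpj b0 0).add ((hpj b1 1).add ((hpj b2 2).add ((hpj b3 3).add (hpj b4 4))))
  have hlinval : ∫ x in (0:ℝ)..1, (b0 + b1*x + b2*x^2 + b3*x^3 + b4*x^4)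
      = b0 + b1/2 + b2/3 + b3/4 + b4/5 := by
    rw [e4, intervalIntegral.integral_add (hpj b0 0) ((hpj b1 1).add ((hpj b2 2).add ((hpj b3 3).add (hpj b4 4)))),
      intervalIntegral.integral_add (hpj b1 1) ((hpj b2 2).add ((hpj b3 3).add (hpj b4 4))),
      intervalIntegral.integral_add (hpj b2 2) ((hpj b3 3).add (hpj b4 4)),
      intervalIntegral.integral_add (hpj b3 3) (hpj b4 4)]
    simp only [intervalIntegral.integral_const_mul, integral_pow]
    norm_num
    ring
  have e3 : (fun x : ℝ => (a0 + a1*x + a2*x^2 + a3*x^3 + a4*x^4 + a5*x^5)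
        * (Real.log x - Real.log (1-x)) + (b0 + b1*x + b2*x^2 + b3*x^3 + b4*x^4))
      = fun x : ℝ => ((a0 + a1*x + a2*x^2 + a3*x^3 + a4*x^4 + a5*x^5) * Real.log x
        - (a0 + a1*x + a2*x^2 + a3*x^3 + a4*x^4 + a5*x^5) * Real.log (1-x))
        + (b0 + b1*x + b2*x^2 + b3*x^3 + b4*x^4) := by
    funext x; ring
  have hFI : IntervalIntegrable (fun x : ℝ => (a0 + a1*x + a2*x^2 + a3*x^3 + a4*x^4 + a5*x^5)
        * (Real.log x - Real.log (1-x)) + (b0 + b1*x + b2*x^2 + b3*x^3 + b4*x^4)) volume 0 1 := by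
    rw [e3]; exact (hlog.1.sub hG).add hlin
  constructor
  · have := hFI
    rw [intervalIntegrable_iff_integrableOn_Ioc_of_le (by norm_num : (0:ℝ) ≤ 1)] at this
    exact this.mono_set Ioo_subset_Ioc_self
  · rw [← integral_Ioc_eq_integral_Ioo,
      ← intervalIntegral.integral_of_le (by norm_num : (0:ℝ) ≤ 1), e3,
      intervalIntegral.integral_add (hlog.1.sub hG) hlin,
      intervalIntegral.integral_sub hlog.1 hG, hlog.2, hGval, hlinval]
    ring

lemma masterInner (A r₀ r₁ x₁ : ℝ) (hx : x₁ ∈ Ioo (0:ℝ) 1) (f : ℝ → ℝ)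
    (hf : ∀ x₂ ∈ Ioo (0:ℝ) 1, x₂ ≠ x₁ → f x₂ = A * (x₁ - x₂)⁻¹ + (r₀ + r₁ * x₂)) :
    Tendsto (fun δ : ℝ => ∫ x₂ in Ioo (0:ℝ) 1 \ Ioo (x₁ - δ) (x₁ + δ), f x₂)
      (nhdsWithin 0 (Ioi 0))
      (nhds (A * (Real.log x₁ - Real.log (1 - x₁)) + (r₀ + r₁ / 2))) := by
  obtain ⟨hx0, hx1⟩ := hx
  have hm : (0:ℝ) < min x₁ (1 - x₁) := lt_min hx0 (by linarith)
  set φ : ℝ → ℝ := fun y => A * (x₁ - y)⁻¹ + (r₀ + r₁ * y) with hφ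
  have key : ∀ δ ∈ Ioo (0:ℝ) (min x₁ (1 - x₁)),
      (∫ x₂ in Ioo (0:ℝ) 1 \ Ioo (x₁ - δ) (x₁ + δ), f x₂)
        = A * (Real.log x₁ - Real.log (1 - x₁)) + (r₀ + r₁ / 2) - 2*(r₀ + r₁*x₁)*δ := by
    intro δ hδ
    obtain ⟨hδ0, hδm⟩ := hδ
    have hδ1 : δ < x₁ := lt_of_lt_of_le hδm (min_le_left _ _)
    have hδ2 : δ < 1 - x₁ := lt_of_lt_of_le hδm (min_le_right _ _)
    have h1 : 0 < x₁ - δ := by linarith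
    have h2 : x₁ + δ < 1 := by linarith
    have h3 : (0:ℝ) ≤ x₁ - δ := h1.le
    have h4 : x₁ + δ ≤ 1 := h2.le
    have hSet : Ioo (0:ℝ) 1 \ Ioo (x₁ - δ) (x₁ + δ) = Ioc 0 (x₁-δ) ∪ Ico (x₁+δ) 1 := by
      ext y
      simp only [mem_diff, mem_Ioo, mem_union, mem_Ioc, mem_Ico, not_and, not_lt]
      constructor
      · rintro ⟨⟨hy0, hy1⟩, hy2⟩
        rcases le_or_gt y (x₁ - δ) with h | h
        · exact Or.inl ⟨hy0, h⟩
        · exact Or.inr ⟨hy2 h, hy1⟩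
      · rintro (⟨hy0, hy1⟩ | ⟨hy0, hy1⟩)
        · exact ⟨⟨hy0, by linarith⟩, fun h => by linarith⟩
        · exact ⟨⟨by linarith, hy1⟩, fun h => by linarith⟩
    have hc₁ : ContinuousOn φ (Icc 0 (x₁-δ)) := by
      apply ContinuousOn.add
      · refine continuousOn_const.mul (ContinuousOn.inv₀
          ((continuous_const.sub continuous_id).continuousOn) ?_)
        intro y hy
        have : δ ≤ x₁ - y := by have := hy.2; linarith
        exact ne_of_gt (lt_of_lt_of_le hδ0 this)
      · exact (continuous_const.add (continuous_const.mul continuous_id)).continuousOn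
    have hc₂ : ContinuousOn φ (Icc (x₁+δ) 1) := by
      apply ContinuousOn.add
      · refine continuousOn_const.mul (ContinuousOn.inv₀
          ((continuous_const.sub continuous_id).continuousOn) ?_)
        intro y hy
        have : x₁ - y ≤ -δ := by have := hy.1; linarith
        exact ne_of_lt (lt_of_le_of_lt this (by linarith))
      · exact (continuous_const.add (continuous_const.mul continuous_id)).continuousOn
    have hI₁ : IntegrableOn φ (Ioc 0 (x₁-δ)) :=
      (hc₁.integrableOn_compact isCompact_Icc).mono_set Ioc_subset_Icc_self
    have hI₂ : IntegrableOn φ (Ico (x₁+δ) 1) :=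
      (hc₂.integrableOn_compact isCompact_Icc).mono_set Ico_subset_Icc_self
    have hEq : EqOn f φ (Ioc 0 (x₁-δ) ∪ Ico (x₁+δ) 1) := by
      rintro y (⟨hy0, hy1⟩ | ⟨hy0, hy1⟩)
      · exact hf y ⟨hy0, by linarith⟩ (by intro h; rw [h] at hy1; linarith)
      · exact hf y ⟨by linarith, hy1⟩ (by intro h; rw [h] at hy0; linarith)
    have hdisj : Disjoint (Ioc (0:ℝ) (x₁-δ)) (Ico (x₁+δ) 1) := by
      rw [Set.disjoint_left]
      rintro y ⟨_, hy1⟩ ⟨hy2, _⟩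
      linarith
    rw [hSet, setIntegral_congr_fun (measurableSet_Ioc.union measurableSet_Ico) hEq,
      setIntegral_union hdisj measurableSet_Ico hI₁ hI₂]
    have hint₁ : ∫ y in Ioc 0 (x₁-δ), φ y
        = (-A * Real.log δ + (r₀*(x₁-δ) + r₁*(x₁-δ)^2/2)) - (-A * Real.log x₁) := by
      rw [← intervalIntegral.integral_of_le h3]
      have hFTC := intervalIntegral.integral_eq_sub_of_hasDerivAt
        (f := fun y => -A * Real.log (x₁ - y) + (r₀*y + r₁/2*y^2))
        (f' := φ) (a := 0) (b := (x₁-δ)) ?_ ?_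
      · rw [hFTC]
        simp only [sub_sub_cancel, sub_zero, mul_zero, zero_pow, mul_one]
        ring_nf
      · intro y hy
        rw [uIcc_of_le h3] at hy
        have hne : x₁ - y ≠ 0 := by
          have := hy.2; exact ne_of_gt (by linarith)
        have h := ((((hasDerivAt_const y x₁).sub (hasDerivAt_id' (x := y))).log hne).const_mul
          (-A)).add (((hasDerivAt_id' (x := y)).const_mul r₀).add
          ((hasDerivAt_pow 2 y).const_mul (r₁/2)))
        refine h.congr_deriv ?_
        simp only [hφ, Pi.sub_apply]
        field_simp [hφ]
        ring
      · exact (by rw [uIcc_of_le h3]; exact hc₁ : ContinuousOn φ (uIcc 0 (x₁-δ))).intervalIntegrable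
    have hint₂ : ∫ y in Ico (x₁+δ) 1, φ y
        = (-A * Real.log (1-x₁) + (r₀*1 + r₁/2*1^2)) - (-A * Real.log δ + (r₀*(x₁+δ) + r₁/2*(x₁+δ)^2)) := by
      rw [integral_Ico_eq_integral_Ioo, ← integral_Ioc_eq_integral_Ioo,
        ← intervalIntegral.integral_of_le h4]
      have hFTC := intervalIntegral.integral_eq_sub_of_hasDerivAt
        (f := fun y => -A * Real.log (y - x₁) + (r₀*y + r₁/2*y^2))
        (f' := φ) (a := (x₁+δ)) (b := 1) ?_ ?_
      · rw [hFTC]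
        simp only [add_sub_cancel_left]
      · intro y hy
        rw [uIcc_of_le h4] at hy
        have hne : y - x₁ ≠ 0 := by
          have := hy.1; exact ne_of_gt (by linarith)
        have h := ((((hasDerivAt_id' (x := y)).sub (hasDerivAt_const y x₁)).log hne).const_mul
          (-A)).add (((hasDerivAt_id' (x := y)).const_mul r₀).add
          ((hasDerivAt_pow 2 y).const_mul (r₁/2)))
        refine h.congr_deriv ?_
        have hne' : x₁ - y ≠ 0 := by intro hcon; apply hne; linarith [sub_eq_zero.mp hcon]
        simp only [hφ, Pi.sub_apply]
        field_simp [hφ]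
        ring
      · exact (by rw [uIcc_of_le h4]; exact hc₂ : ContinuousOn φ (uIcc (x₁+δ) 1)).intervalIntegrable
    rw [hint₁, hint₂]
    ring
  have hE : Tendsto (fun δ : ℝ => A * (Real.log x₁ - Real.log (1 - x₁)) + (r₀ + r₁ / 2)
      - 2*(r₀ + r₁*x₁)*δ) (nhdsWithin 0 (Ioi 0))
      (nhds (A * (Real.log x₁ - Real.log (1 - x₁)) + (r₀ + r₁ / 2))) := by
    have hcont : Continuous (fun δ : ℝ => A * (Real.log x₁ - Real.log (1 - x₁)) + (r₀ + r₁ / 2)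
        - 2*(r₀ + r₁*x₁)*δ) := by continuity
    have := (hcont.tendsto 0).mono_left (nhdsWithin_le_nhds (s := Ioi (0:ℝ)))
    simpa using this
  refine hE.congr' ?_
  filter_upwards [Ioo_mem_nhdsGT hm] with δ hδ
  exact (key δ hδ).symm

lemma buildIsJ (ℓ ℓ' : ℕ) (A R0 R1 : ℝ → ℝ)
    (hid : ∀ x₁ ∈ Ioo (0:ℝ) 1, ∀ x₂ ∈ Ioo (0:ℝ) 1, x₂ ≠ x₁ →
      legendreP ℓ (1 - 2 * x₁) * (legendreP ℓ' (1 - 2 * x₁) - legendreP ℓ' (1 - 2 * x₂))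
        / (x₁ - x₂) ^ 2 = A x₁ * (x₁ - x₂)⁻¹ + (R0 x₁ + R1 x₁ * x₂))
    (a0 a1 a2 a3 a4 a5 b0 b1 b2 b3 b4 : ℝ)
    (hA : ∀ x : ℝ, A x = a0 + a1*x + a2*x^2 + a3*x^3 + a4*x^4 + a5*x^5)
    (hb : ∀ x : ℝ, R0 x + R1 x / 2 = b0 + b1*x + b2*x^2 + b3*x^3 + b4*x^4) :
    IsJ ℓ ℓ' (a1/2 + a2/2 + a3*(11/24) + a4*(5/12) + a5*(137/360)
      + b0 + b1/2 + b2/3 + b3/4 + b4/5) := by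
  refine ⟨fun x => (a0 + a1*x + a2*x^2 + a3*x^3 + a4*x^4 + a5*x^5)
      * (Real.log x - Real.log (1-x)) + (b0 + b1*x + b2*x^2 + b3*x^3 + b4*x^4), ?_,
    (masterOuter a0 a1 a2 a3 a4 a5 b0 b1 b2 b3 b4).1,
    (masterOuter a0 a1 a2 a3 a4 a5 b0 b1 b2 b3 b4).2⟩
  intro x₁ hx₁
  have h := masterInner (A x₁) (R0 x₁) (R1 x₁) x₁ hx₁
    (fun x₂ => legendreP ℓ (1 - 2 * x₁) * (legendreP ℓ' (1 - 2 * x₁) - legendreP ℓ' (1 - 2 * x₂))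
      / (x₁ - x₂) ^ 2)
    (fun x₂ h2 hne => hid x₁ hx₁ x₂ h2 hne)
  rw [hA x₁] at h
  have hb' : R0 x₁ + R1 x₁ / 2 = b0 + b1*x₁ + b2*x₁^2 + b3*x₁^3 + b4*x₁^4 := hb x₁
  rw [hb'] at h
  exact h

lemma isJ_col0 (ℓ : ℕ) : IsJ ℓ 0 0 := by
  have h := buildIsJ ℓ 0 (fun _ => 0) (fun _ => 0) (fun _ => 0)
    (by intro x₁ _ x₂ _ _; simp [legendreP_zero]) 0 0 0 0 0 0 0 0 0 0 0
    (by intro x; ring) (by intro x; ring)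
  norm_num at h
  exact h

lemma isJ01 : IsJ 0 1 0 := by
  have h := buildIsJ 0 1 (fun _ => -2) (fun _ => 0) (fun _ => 0)
    (by
      intro x₁ _ x₂ _ hne
      simp only [legendreP_zero, legendreP_one]
      have h12 : x₁ - x₂ ≠ 0 := sub_ne_zero.mpr (Ne.symm hne)
      field_simp
      ring)
    (-2) 0 0 0 0 0 0 0 0 0 0 (by intro x; ring) (by intro x; ring)
  norm_num at h
  exact h

lemma isJ11 : IsJ 1 1 2 := by
  have h := buildIsJ 1 1 (fun x => -2*(1-2*x)) (fun _ => 0) (fun _ => 0)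
    (by
      intro x₁ _ x₂ _ hne
      simp only [legendreP_one]
      have h12 : x₁ - x₂ ≠ 0 := sub_ne_zero.mpr (Ne.symm hne)
      field_simp
      ring)
    (-2) 4 0 0 0 0 0 0 0 0 0 (by intro x; ring) (by intro x; ring)
  norm_num at h
  exact h

lemma isJ21 : IsJ 2 1 0 := by
  have h := buildIsJ 2 1 (fun x => -2*(1-6*x+6*x^2)) (fun _ => 0) (fun _ => 0)
    (by
      intro x₁ _ x₂ _ hne
      simp only [legendreP_one, legendreP_two]
      have h12 : x₁ - x₂ ≠ 0 := sub_ne_zero.mpr (Ne.symm hne)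
      field_simp
      ring)
    (-2) 12 (-12) 0 0 0 0 0 0 0 0 (by intro x; ring) (by intro x; ring)
  norm_num at h
  exact h

lemma isJ31 : IsJ 3 1 (1/3) := by
  have h := buildIsJ 3 1 (fun x => -2*(1-12*x+30*x^2-20*x^3)) (fun _ => 0) (fun _ => 0)
    (by
      intro x₁ _ x₂ _ hne
      simp only [legendreP_one, legendreP_three]
      have h12 : x₁ - x₂ ≠ 0 := sub_ne_zero.mpr (Ne.symm hne)
      field_simp
      ring)
    (-2) 24 (-60) 40 0 0 0 0 0 0 0 (by intro x; ring) (by intro x; ring)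
  norm_num at h
  exact h

lemma isJ02 : IsJ 0 2 0 := by
  have h := buildIsJ 0 2 (fun x => 12*x-6) (fun _ => -6) (fun _ => 0)
    (by
      intro x₁ _ x₂ _ hne
      simp only [legendreP_zero, legendreP_two]
      have h12 : x₁ - x₂ ≠ 0 := sub_ne_zero.mpr (Ne.symm hne)
      field_simp
      ring)
    (-6) 12 0 0 0 0 (-6) 0 0 0 0 (by intro x; ring) (by intro x; ring)
  norm_num at h
  exact h

lemma isJ12 : IsJ 1 2 0 := by
  have h := buildIsJ 1 2 (fun x => (1-2*x)*(12*x-6)) (fun x => -6*(1-2*x)) (fun _ => 0)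
    (by
      intro x₁ _ x₂ _ hne
      simp only [legendreP_one, legendreP_two]
      have h12 : x₁ - x₂ ≠ 0 := sub_ne_zero.mpr (Ne.symm hne)
      field_simp
      ring)
    (-6) 24 (-24) 0 0 0 (-6) 12 0 0 0 (by intro x; ring) (by intro x; ring)
  norm_num at h
  exact h

lemma isJ22 : IsJ 2 2 3 := by
  have h := buildIsJ 2 2 (fun x => (1-6*x+6*x^2)*(12*x-6)) (fun x => -6*(1-6*x+6*x^2))
    (fun _ => 0)
    (by
      intro x₁ _ x₂ _ hne
      simp only [legendreP_two]
      have h12 : x₁ - x₂ ≠ 0 := sub_ne_zero.mpr (Ne.symm hne)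
      field_simp
      ring)
    (-6) 48 (-108) 72 0 0 (-6) 36 (-36) 0 0 (by intro x; ring) (by intro x; ring)
  norm_num at h
  exact h

lemma isJ32 : IsJ 3 2 0 := by
  have h := buildIsJ 3 2 (fun x => (1-12*x+30*x^2-20*x^3)*(12*x-6))
    (fun x => -6*(1-12*x+30*x^2-20*x^3)) (fun _ => 0)
    (by
      intro x₁ _ x₂ _ hne
      simp only [legendreP_two, legendreP_three]
      have h12 : x₁ - x₂ ≠ 0 := sub_ne_zero.mpr (Ne.symm hne)
      field_simp
      ring)
    (-6) 84 (-324) 480 (-240) 0 (-6) 72 (-180) 120 0 (by intro x; ring) (by intro x; ring)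
  norm_num at h
  exact h

lemma isJ03 : IsJ 0 3 0 := by
  have h := buildIsJ 0 3 (fun x => -12+60*x-60*x^2) (fun x => 40*x-30) (fun _ => 20)
    (by
      intro x₁ _ x₂ _ hne
      simp only [legendreP_zero, legendreP_three]
      have h12 : x₁ - x₂ ≠ 0 := sub_ne_zero.mpr (Ne.symm hne)
      field_simp
      ring)
    (-12) 60 (-60) 0 0 0 (-20) 40 0 0 0 (by intro x; ring) (by intro x; ring)
  norm_num at h
  exact h

lemma isJ13 : IsJ 1 3 (1/3) := by
  have h := buildIsJ 1 3 (fun x => (1-2*x)*(-12+60*x-60*x^2))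
    (fun x => (1-2*x)*(40*x-30)) (fun x => 20*(1-2*x))
    (by
      intro x₁ _ x₂ _ hne
      simp only [legendreP_one, legendreP_three]
      have h12 : x₁ - x₂ ≠ 0 := sub_ne_zero.mpr (Ne.symm hne)
      field_simp
      ring)
    (-12) 84 (-180) 120 0 0 (-20) 80 (-80) 0 0 (by intro x; ring) (by intro x; ring)
  norm_num at h
  exact h

lemma isJ23 : IsJ 2 3 0 := by
  have h := buildIsJ 2 3 (fun x => (1-6*x+6*x^2)*(-12+60*x-60*x^2))
    (fun x => (1-6*x+6*x^2)*(40*x-30)) (fun x => 20*(1-6*x+6*x^2))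
    (by
      intro x₁ _ x₂ _ hne
      simp only [legendreP_two, legendreP_three]
      have h12 : x₁ - x₂ ≠ 0 := sub_ne_zero.mpr (Ne.symm hne)
      field_simp
      ring)
    (-12) 132 (-492) 720 (-360) 0 (-20) 160 (-360) 240 0 (by intro x; ring) (by intro x; ring)
  norm_num at h
  exact h

lemma isJ33 : IsJ 3 3 (11/3) := by
  have h := buildIsJ 3 3 (fun x => (1-12*x+30*x^2-20*x^3)*(-12+60*x-60*x^2))
    (fun x => (1-12*x+30*x^2-20*x^3)*(40*x-30)) (fun x => 20*(1-12*x+30*x^2-20*x^3))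
    (by
      intro x₁ _ x₂ _ hne
      simp only [legendreP_three]
      have h12 : x₁ - x₂ ≠ 0 := sub_ne_zero.mpr (Ne.symm hne)
      field_simp
      ring)
    (-12) 204 (-1140) 2760 (-3000) 1200 (-20) 280 (-1080) 1600 (-800)
    (by intro x; ring) (by intro x; ring)
  norm_num at h
  exact h

/-- The truncated lightcone Hamiltonian of 2D large-`N_c` QCD at `Δ_max = 4`,
in units of `g²N_c/π`: for `ℓ, ℓ' ∈ {0,1,2,3}`, the quantity
`√((2ℓ+1)(2ℓ'+1))·J(ℓ,ℓ')` equals the `(ℓ,ℓ')` entry of the matrix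
`((0,0,0,0),(0,6,0,√(7/3)),(0,0,15,0),(0,√(7/3),0,77/3))`. -/
theorem J_matrix_deltaMax_four :
    ∀ ℓ ℓ' : Fin 4, ∃ v : ℝ, IsJ ℓ ℓ' v ∧
      Real.sqrt ((2 * (ℓ : ℝ) + 1) * (2 * (ℓ' : ℝ) + 1)) * v =
        (!![0, 0, 0, 0;
            0, 6, 0, Real.sqrt (7 / 3);
            0, 0, 15, 0;
            0, Real.sqrt (7 / 3), 0, 77 / 3] : Matrix (Fin 4) (Fin 4) ℝ) ℓ ℓ' := by
  have sqrt9 : Real.sqrt 9 = 3 := by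
    rw [show (9:ℝ) = 3^2 by norm_num, Real.sqrt_sq (by norm_num : (0:ℝ) ≤ 3)]
  have sqrt25 : Real.sqrt 25 = 5 := by
    rw [show (25:ℝ) = 5^2 by norm_num, Real.sqrt_sq (by norm_num : (0:ℝ) ≤ 5)]
  have sqrt49 : Real.sqrt 49 = 7 := by
    rw [show (49:ℝ) = 7^2 by norm_num, Real.sqrt_sq (by norm_num : (0:ℝ) ≤ 7)]
  have sqrt73 : Real.sqrt 21 * (1/3) = Real.sqrt (7/3) := by
    rw [show (7/3:ℝ) = 21*(1/3)^2 by norm_num,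
      Real.sqrt_mul (by norm_num : (0:ℝ) ≤ 21),
      Real.sqrt_sq (by norm_num : (0:ℝ) ≤ 1/3)]
  intro ℓ ℓ'
  fin_cases ℓ <;> fin_cases ℓ'
  · exact ⟨0, isJ_col0 0, by norm_num⟩
  · exact ⟨0, isJ01, by norm_num⟩
  · exact ⟨0, isJ02, by norm_num⟩
  · exact ⟨0, isJ03, by norm_num⟩
  · exact ⟨0, isJ_col0 1, by norm_num⟩
  · exact ⟨2, isJ11, by norm_num [sqrt9]⟩
  · exact ⟨0, isJ12, by norm_num⟩
  · exact ⟨1/3, isJ13, by norm_num [← sqrt73]⟩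
  · exact ⟨0, isJ_col0 2, by norm_num⟩
  · exact ⟨0, isJ21, by norm_num⟩
  · exact ⟨3, isJ22, by norm_num [sqrt25]⟩
  · exact ⟨0, isJ23, by norm_num⟩
  · exact ⟨0, isJ_col0 3, by norm_num⟩
  · exact ⟨1/3, isJ31, by norm_num [← sqrt73]⟩
  · exact ⟨0, isJ32, by norm_num⟩
  · exact ⟨11/3, isJ33, by norm_num [sqrt49]⟩
end
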